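/- arXiv:1403.4571 — 8 statements merged into one kernel-verified Lean document; each statement's English description precedes it below -/
import Mathlib

section
/- Let n ≥ 1 and let B, A_0, A_1, ..., A_n be nonzero pairwise distinct complex numbers. Then (B/(B-A_0))^2 · ∏_{j=1}^n B/(B-A_j) = ∑_{i=1}^n (A_i/(A_i-A_0))^2 · (∏_{1≤j≤n, j≠i} A_i/(A_i-A_j)) · B/(B-A_i) + (∏_{i=1}^n A_0/(A_0-A_i)) · [ (B/(B-A_0))^2 + (∑_{l=1}^n A_l/(A_l-A_0)) · B/(B-A_0) ]. -/
open Finset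

lemma two_point (B x y : ℂ) (hBx : B ≠ x) (hBy : B ≠ y) (hxy : x ≠ y) :
    B / (B - x) * (B / (B - y))
      = x / (x - y) * (B / (B - x)) + y / (y - x) * (B / (B - y)) := by
  have h1 : B - x ≠ 0 := sub_ne_zero.mpr hBx
  have h2 : B - y ≠ 0 := sub_ne_zero.mpr hBy
  have h3 : x - y ≠ 0 := sub_ne_zero.mpr hxy
  rw [show y - x = -(x - y) by ring, div_neg]
  field_simp
  ring

lemma sq_point (B x y : ℂ) (hBx : B ≠ x) (hBy : B ≠ y) (hxy : x ≠ y) :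
    (B / (B - x)) ^ 2 * (B / (B - y))
      = (y / (y - x)) ^ 2 * (B / (B - y))
        + x / (x - y) * ((B / (B - x)) ^ 2 + y / (y - x) * (B / (B - x))) := by
  have h := two_point B x y hBx hBy hxy
  linear_combination (B / (B - x) + y / (y - x)) * h

lemma key (A : ℕ → ℂ) (b : ℂ) (s : Finset ℕ) :
    (∀ i ∈ s, b ≠ A i) → (∀ i ∈ s, ∀ j ∈ s, i ≠ j → A i ≠ A j) →
    ∀ B : ℂ, B ≠ b → (∀ i ∈ s, B ≠ A i) →
    (B / (B - b)) ^ 2 * ∏ j ∈ s, B / (B - A j)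
      = (∑ i ∈ s, (A i / (A i - b)) ^ 2 *
          (∏ j ∈ s.erase i, A i / (A i - A j)) * (B / (B - A i)))
        + (∏ i ∈ s, b / (b - A i)) *
          ((B / (B - b)) ^ 2 + (∑ l ∈ s, A l / (A l - b)) * (B / (B - b))) := by
  induction s using Finset.induction_on with
  | empty => intro _ _ B _ _; simp
  | @insert a s' ha IH =>
    intro hb hAA B hBb hBA
    have hb' : ∀ i ∈ s', b ≠ A i := fun i hi => hb i (mem_insert_of_mem hi)
    have hAA' : ∀ i ∈ s', ∀ j ∈ s', i ≠ j → A i ≠ A j :=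
      fun i hi j hj => hAA i (mem_insert_of_mem hi) j (mem_insert_of_mem hj)
    have hba : b ≠ A a := hb a (mem_insert_self a s')
    have haa' : ∀ i ∈ s', A a ≠ A i := fun i hi =>
      hAA a (mem_insert_self a s') i (mem_insert_of_mem hi)
        (fun h => ha (h ▸ hi))
    have hab : A a ≠ b := hba.symm
    have hBa : B ≠ A a := hBA a (mem_insert_self a s')
    have hBA' : ∀ i ∈ s', B ≠ A i := fun i hi => hBA i (mem_insert_of_mem hi)
    have hIH := IH hb' hAA' B hBb hBA'
    have hIHa := IH hb' hAA' (A a) hab haa'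
    rw [prod_insert ha, prod_insert ha, sum_insert ha, sum_insert ha,
      erase_insert ha]
    have hrw : ∑ i ∈ s', (A i / (A i - b)) ^ 2 *
          (∏ j ∈ (insert a s').erase i, A i / (A i - A j)) * (B / (B - A i))
        = ∑ i ∈ s', (A i / (A i - b)) ^ 2 *
          (∏ j ∈ s'.erase i, A i / (A i - A j)) * (A i / (A i - A a))
            * (B / (B - A i)) := by
      refine Finset.sum_congr rfl fun i hi => ?_
      have hia : i ≠ a := fun h => ha (h ▸ hi)
      have hane : a ∉ s'.erase i := fun h => ha (Finset.mem_of_mem_erase h)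
      rw [Finset.erase_insert_of_ne hia.symm, prod_insert hane]
      ring
    rw [hrw]
    have hsum : B / (B - A a) *
          ∑ i ∈ s', (A i / (A i - b)) ^ 2 *
            (∏ j ∈ s'.erase i, A i / (A i - A j)) * (B / (B - A i))
        = (∑ i ∈ s', (A i / (A i - b)) ^ 2 *
            (∏ j ∈ s'.erase i, A i / (A i - A j)) * (A a / (A a - A i)))
              * (B / (B - A a))
          + ∑ i ∈ s', (A i / (A i - b)) ^ 2 *
            (∏ j ∈ s'.erase i, A i / (A i - A j)) * (A i / (A i - A a))
              * (B / (B - A i)) := by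
      rw [Finset.mul_sum, Finset.sum_mul, ← Finset.sum_add_distrib]
      refine Finset.sum_congr rfl fun i hi => ?_
      have h2p := two_point B (A a) (A i) hBa (hBA' i hi) (haa' i hi)
      linear_combination ((A i / (A i - b)) ^ 2 *
        (∏ j ∈ s'.erase i, A i / (A i - A j))) * h2p
    have hsq := sq_point B b (A a) hBb hBa hba
    have h3 := two_point B b (A a) hBb hBa hba
    linear_combination (B / (B - A a)) * hIH + hsum
      + (∏ i ∈ s', b / (b - A i)) * hsq
      + ((∏ i ∈ s', b / (b - A i)) * (∑ l ∈ s', A l / (A l - b))) * h3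
      - (B / (B - A a)) * hIHa

theorem stmt0 (n : ℕ) (hn : 1 ≤ n) (B : ℂ) (A : ℕ → ℂ)
    (hB : B ≠ 0) (hA0 : ∀ i ≤ n, A i ≠ 0)
    (hBA : ∀ i ≤ n, B ≠ A i)
    (hAA : ∀ i ≤ n, ∀ j ≤ n, i ≠ j → A i ≠ A j) :
    (B / (B - A 0)) ^ 2 * ∏ j ∈ Icc 1 n, B / (B - A j)
      = (∑ i ∈ Icc 1 n, (A i / (A i - A 0)) ^ 2 *
          (∏ j ∈ (Icc 1 n).erase i, A i / (A i - A j)) * (B / (B - A i)))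
        + (∏ i ∈ Icc 1 n, A 0 / (A 0 - A i)) *
          ((B / (B - A 0)) ^ 2 +
            (∑ l ∈ Icc 1 n, A l / (A l - A 0)) * (B / (B - A 0))) := by
  have hmem : ∀ i ∈ Icc 1 n, 1 ≤ i ∧ i ≤ n := fun i hi => Finset.mem_Icc.mp hi
  have hb : ∀ i ∈ Icc 1 n, A 0 ≠ A i := by
    intro i hi
    have h1 := (hmem i hi).1
    exact hAA 0 (Nat.zero_le n) i (hmem i hi).2 (by omega)
  exact key A (A 0) (Icc 1 n) hb
    (fun i hi j hj hij => hAA i (hmem i hi).2 j (hmem j hj).2 hij)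
    B (hBA 0 (Nat.zero_le n)) (fun i hi => hBA i (hmem i hi).2)
end

section
/- Let n ≥ 1 and let B, A_0, A_1, ..., A_n be nonzero pairwise distinct complex numbers. Then (A_0/(B-A_0))^2 · ∏_{j=1}^n A_j/(B-A_j) = ∑_{i=1}^n (A_0/(A_i-A_0))^2 · (∏_{1≤j≤n, j≠i} A_j/(A_i-A_j)) · A_i/(B-A_i) + (∏_{i=1}^n A_i/(A_0-A_i)) · [ (A_0/(B-A_0))^2 + (∑_{l=1}^n A_0/(A_l-A_0)) · A_0/(B-A_0) ]. -/
open Finset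

lemma pf (A : ℕ → ℂ) (s : Finset ℕ) :
    ∀ x : ℂ, s.Nonempty → (∀ i ∈ s, x ≠ A i) → (∀ i ∈ s, ∀ j ∈ s, i ≠ j → A i ≠ A j) →
    ∏ i ∈ s, (x - A i)⁻¹ = ∑ i ∈ s, (∏ j ∈ s.erase i, (A i - A j)⁻¹) * (x - A i)⁻¹ := by
  induction s using Finset.cons_induction with
  | empty => intro x hs _ _; exact absurd hs (by simp)
  | cons a t ha ih =>
    intro x _ hx hAA
    rcases t.eq_empty_or_nonempty with rfl | ht
    · simp
    have hxa : x ≠ A a := hx a (mem_cons_self a t)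
    have hx' : ∀ i ∈ t, x ≠ A i := fun i hi => hx i (mem_cons.2 (Or.inr hi))
    have hAA' : ∀ i ∈ t, ∀ j ∈ t, i ≠ j → A i ≠ A j := fun i hi j hj hij =>
      hAA i (mem_cons.2 (Or.inr hi)) j (mem_cons.2 (Or.inr hj)) hij
    have hne : ∀ i ∈ t, i ≠ a := fun i hi => fun h => ha (h ▸ hi)
    have hax : ∀ i ∈ t, A a ≠ A i := fun i hi =>
      hAA a (mem_cons_self a t) i (mem_cons.2 (Or.inr hi)) (fun h => ha (h ▸ hi))
    have IH1 := ih x ht hx' hAA'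
    have IH2 := ih (A a) ht hax hAA'
    rw [Finset.prod_cons, Finset.sum_cons, Finset.erase_cons]
    have hsum : ∑ i ∈ t, (∏ j ∈ (cons a t ha).erase i, (A i - A j)⁻¹) * (x - A i)⁻¹
        = ∑ i ∈ t, ((A i - A a)⁻¹ * ∏ j ∈ t.erase i, (A i - A j)⁻¹) * (x - A i)⁻¹ := by
      refine Finset.sum_congr rfl fun i hi => ?_
      have h1 : (cons a t ha).erase i = cons a (t.erase i) (fun h => ha (mem_of_mem_erase h)) := by
        rw [Finset.cons_eq_insert, Finset.cons_eq_insert, Finset.erase_insert_of_ne (Ne.symm (hne i hi))]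
      rw [h1, Finset.prod_cons]
    rw [hsum, IH1, IH2, Finset.mul_sum, Finset.sum_mul, ← Finset.sum_add_distrib]
    refine Finset.sum_congr rfl fun i hi => ?_
    have h1 : x - A a ≠ 0 := sub_ne_zero.2 hxa
    have h2 : x - A i ≠ 0 := sub_ne_zero.2 (hx' i hi)
    have h3 : A a - A i ≠ 0 := sub_ne_zero.2 (hax i hi)
    have h4 : A i - A a ≠ 0 := sub_ne_zero.2 (Ne.symm (hax i hi))
    generalize (∏ j ∈ t.erase i, (A i - A j)⁻¹) = d
    field_simp
    ring

lemma pf2 (A : ℕ → ℂ) (s : Finset ℕ) :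
    ∀ x : ℂ, (∀ i ∈ s, x ≠ A i) → (∀ i ∈ s, ∀ j ∈ s, i ≠ j → A i ≠ A j) →
    ∑ i ∈ s, (∏ j ∈ s.erase i, (A i - A j)⁻¹) * ((x - A i)⁻¹ * (x - A i)⁻¹)
      = (∏ i ∈ s, (x - A i)⁻¹) * ∑ l ∈ s, (x - A l)⁻¹ := by
  induction s using Finset.cons_induction with
  | empty => intro x _ _; simp
  | cons a t ha ih =>
    intro x hx hAA
    rcases t.eq_empty_or_nonempty with rfl | ht
    · simp
    have hxa : x ≠ A a := hx a (mem_cons_self a t)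
    have hx' : ∀ i ∈ t, x ≠ A i := fun i hi => hx i (mem_cons.2 (Or.inr hi))
    have hAA' : ∀ i ∈ t, ∀ j ∈ t, i ≠ j → A i ≠ A j := fun i hi j hj hij =>
      hAA i (mem_cons.2 (Or.inr hi)) j (mem_cons.2 (Or.inr hj)) hij
    have hne : ∀ i ∈ t, i ≠ a := fun i hi => fun h => ha (h ▸ hi)
    have hax : ∀ i ∈ t, A a ≠ A i := fun i hi =>
      hAA a (mem_cons_self a t) i (mem_cons.2 (Or.inr hi)) (fun h => ha (h ▸ hi))
    have IH1 := pf A t x ht hx' hAA'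
    have IH2 := pf A t (A a) ht hax hAA'
    have IH3 := ih x hx' hAA'
    rw [Finset.prod_cons, Finset.sum_cons, Finset.sum_cons, Finset.erase_cons]
    have hsum : ∑ i ∈ t, (∏ j ∈ (cons a t ha).erase i, (A i - A j)⁻¹) * ((x - A i)⁻¹ * (x - A i)⁻¹)
        = ∑ i ∈ t, ((A i - A a)⁻¹ * ∏ j ∈ t.erase i, (A i - A j)⁻¹) * ((x - A i)⁻¹ * (x - A i)⁻¹) := by
      refine Finset.sum_congr rfl fun i hi => ?_
      have h1 : (cons a t ha).erase i = cons a (t.erase i) (fun h => ha (mem_of_mem_erase h)) := by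
        rw [Finset.cons_eq_insert, Finset.cons_eq_insert, Finset.erase_insert_of_ne (Ne.symm (hne i hi))]
      rw [h1, Finset.prod_cons]
    rw [hsum, IH2]
    -- RHS: (x-Aa)⁻¹ * ∏_t * ((x-Aa)⁻¹ + ∑) = (x-Aa)⁻¹*(x-Aa)⁻¹*∏_t + (x-Aa)⁻¹*(∏_t * ∑)
    have hrhs : ((x - A a)⁻¹ * ∏ i ∈ t, (x - A i)⁻¹) * ((x - A a)⁻¹ + ∑ l ∈ t, (x - A l)⁻¹)
        = (x - A a)⁻¹ * (x - A a)⁻¹ * ∏ i ∈ t, (x - A i)⁻¹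
          + (x - A a)⁻¹ * ((∏ i ∈ t, (x - A i)⁻¹) * ∑ l ∈ t, (x - A l)⁻¹) := by ring
    rw [hrhs, ← IH3, IH1, Finset.mul_sum, Finset.mul_sum, Finset.sum_mul, ← Finset.sum_add_distrib,
      ← Finset.sum_add_distrib]
    refine Finset.sum_congr rfl fun i hi => ?_
    have h1 : x - A a ≠ 0 := sub_ne_zero.2 hxa
    have h2 : x - A i ≠ 0 := sub_ne_zero.2 (hx' i hi)
    have h3 : A a - A i ≠ 0 := sub_ne_zero.2 (hax i hi)
    have h4 : A i - A a ≠ 0 := sub_ne_zero.2 (Ne.symm (hax i hi))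
    generalize (∏ j ∈ t.erase i, (A i - A j)⁻¹) = d
    field_simp
    ring
lemma pfkey (U W d : ℂ) (hU : U ≠ 0) (hW : W ≠ 0) (hUW : U + W ≠ 0) :
    U⁻¹ * U⁻¹ * (d * (U + W)⁻¹)
      = -W⁻¹ * -W⁻¹ * d * (U + W)⁻¹ + d * W⁻¹ * (U⁻¹ * U⁻¹) - d * (W⁻¹ * W⁻¹) * U⁻¹ := by
  field_simp
  ring
lemma pfmain (A : ℕ → ℂ) (s : Finset ℕ) (hs : s.Nonempty) (B a0 : ℂ)
    (hB0 : B ≠ a0) (hB : ∀ i ∈ s, B ≠ A i) (h0 : ∀ i ∈ s, a0 ≠ A i)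
    (hAA : ∀ i ∈ s, ∀ j ∈ s, i ≠ j → A i ≠ A j) :
    (B - a0)⁻¹ * (B - a0)⁻¹ * ∏ i ∈ s, (B - A i)⁻¹
      = (∑ i ∈ s, (A i - a0)⁻¹ * (A i - a0)⁻¹ * (∏ j ∈ s.erase i, (A i - A j)⁻¹) * (B - A i)⁻¹)
        + (∏ i ∈ s, (a0 - A i)⁻¹) *
            ((B - a0)⁻¹ * (B - a0)⁻¹ + (∑ l ∈ s, (A l - a0)⁻¹) * (B - a0)⁻¹) := by
  have E1 := pf A s B hs hB hAA
  have E2 := pf A s a0 hs h0 hAA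
  have E3 := pf2 A s a0 h0 hAA
  have hneg : ∑ l ∈ s, (A l - a0)⁻¹ = -∑ l ∈ s, (a0 - A l)⁻¹ := by
    rw [← Finset.sum_neg_distrib]
    exact Finset.sum_congr rfl fun l _ => by rw [← inv_neg, neg_sub]
  calc (B - a0)⁻¹ * (B - a0)⁻¹ * ∏ i ∈ s, (B - A i)⁻¹
      = ∑ i ∈ s, ((A i - a0)⁻¹ * (A i - a0)⁻¹ * (∏ j ∈ s.erase i, (A i - A j)⁻¹) * (B - A i)⁻¹
          + (∏ j ∈ s.erase i, (A i - A j)⁻¹) * (a0 - A i)⁻¹ * ((B - a0)⁻¹ * (B - a0)⁻¹)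
          - (∏ j ∈ s.erase i, (A i - A j)⁻¹) * ((a0 - A i)⁻¹ * (a0 - A i)⁻¹) * (B - a0)⁻¹) := by
        rw [E1, Finset.mul_sum]
        refine Finset.sum_congr rfl fun i hi => ?_
        have h1 : B - a0 ≠ 0 := sub_ne_zero.2 hB0
        have h2 : B - A i ≠ 0 := sub_ne_zero.2 (hB i hi)
        have h3 : a0 - A i ≠ 0 := sub_ne_zero.2 (h0 i hi)
        have h4 : A i - a0 ≠ 0 := sub_ne_zero.2 (Ne.symm (h0 i hi))
        generalize (∏ j ∈ s.erase i, (A i - A j)⁻¹) = d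
        have hAi : (A i - a0)⁻¹ = -(a0 - A i)⁻¹ := by rw [← inv_neg, neg_sub]
        have hrel : B - A i = (B - a0) + (a0 - A i) := by ring
        have h2' : (B - a0) + (a0 - A i) ≠ 0 := hrel ▸ h2
        rw [hAi, hrel]
        linear_combination pfkey (B - a0) (a0 - A i) d h1 h3 h2'
    _ = (∑ i ∈ s, (A i - a0)⁻¹ * (A i - a0)⁻¹ * (∏ j ∈ s.erase i, (A i - A j)⁻¹) * (B - A i)⁻¹)
          + (∑ i ∈ s, (∏ j ∈ s.erase i, (A i - A j)⁻¹) * (a0 - A i)⁻¹) * ((B - a0)⁻¹ * (B - a0)⁻¹)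
          - (∑ i ∈ s, (∏ j ∈ s.erase i, (A i - A j)⁻¹) * ((a0 - A i)⁻¹ * (a0 - A i)⁻¹)) * (B - a0)⁻¹ := by
        rw [Finset.sum_sub_distrib, Finset.sum_add_distrib, Finset.sum_mul, Finset.sum_mul]
    _ = (∑ i ∈ s, (A i - a0)⁻¹ * (A i - a0)⁻¹ * (∏ j ∈ s.erase i, (A i - A j)⁻¹) * (B - A i)⁻¹)
        + (∏ i ∈ s, (a0 - A i)⁻¹) *
            ((B - a0)⁻¹ * (B - a0)⁻¹ + (∑ l ∈ s, (A l - a0)⁻¹) * (B - a0)⁻¹) := by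
        rw [← E2, E3, hneg]
        ring
theorem stmt1 (n : ℕ) (hn : 1 ≤ n) (B : ℂ) (A : ℕ → ℂ)
    (hB : B ≠ 0) (hA0 : ∀ i ≤ n, A i ≠ 0)
    (hBA : ∀ i ≤ n, B ≠ A i)
    (hAA : ∀ i ≤ n, ∀ j ≤ n, i ≠ j → A i ≠ A j) :
    (A 0 / (B - A 0)) ^ 2 * ∏ j ∈ Icc 1 n, A j / (B - A j)
      = (∑ i ∈ Icc 1 n, (A 0 / (A i - A 0)) ^ 2 *
          (∏ j ∈ (Icc 1 n).erase i, A j / (A i - A j)) * (A i / (B - A i)))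
        + (∏ i ∈ Icc 1 n, A i / (A 0 - A i)) *
          ((A 0 / (B - A 0)) ^ 2 +
            (∑ l ∈ Icc 1 n, A 0 / (A l - A 0)) * (A 0 / (B - A 0))) := by
  have hmem : ∀ i ∈ Icc 1 n, 1 ≤ i ∧ i ≤ n := fun i hi => mem_Icc.1 hi
  have hs : (Icc 1 n).Nonempty := ⟨1, mem_Icc.2 ⟨le_refl 1, hn⟩⟩
  have hBne : ∀ i ∈ Icc 1 n, B ≠ A i := fun i hi => hBA i (hmem i hi).2
  have h0ne : ∀ i ∈ Icc 1 n, A 0 ≠ A i := fun i hi =>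
    hAA 0 (Nat.zero_le n) i (hmem i hi).2 (by have := (hmem i hi).1; omega)
  have hAA' : ∀ i ∈ Icc 1 n, ∀ j ∈ Icc 1 n, i ≠ j → A i ≠ A j := fun i hi j hj hij =>
    hAA i (hmem i hi).2 j (hmem j hj).2 hij
  have H := pfmain A (Icc 1 n) hs B (A 0) (hBA 0 (Nat.zero_le n)) hBne h0ne hAA'
  calc (A 0 / (B - A 0)) ^ 2 * ∏ j ∈ Icc 1 n, A j / (B - A j)
      = (A 0 * A 0 * ∏ j ∈ Icc 1 n, A j) *
          ((B - A 0)⁻¹ * (B - A 0)⁻¹ * ∏ i ∈ Icc 1 n, (B - A i)⁻¹) := by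
        simp only [div_eq_mul_inv]
        rw [Finset.prod_mul_distrib]
        ring
    _ = (A 0 * A 0 * ∏ j ∈ Icc 1 n, A j) *
          ((∑ i ∈ Icc 1 n, (A i - A 0)⁻¹ * (A i - A 0)⁻¹ *
              (∏ j ∈ (Icc 1 n).erase i, (A i - A j)⁻¹) * (B - A i)⁻¹)
            + (∏ i ∈ Icc 1 n, (A 0 - A i)⁻¹) *
                ((B - A 0)⁻¹ * (B - A 0)⁻¹ + (∑ l ∈ Icc 1 n, (A l - A 0)⁻¹) * (B - A 0)⁻¹)) := by
        rw [H]
    _ = (∑ i ∈ Icc 1 n, (A 0 / (A i - A 0)) ^ 2 *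
          (∏ j ∈ (Icc 1 n).erase i, A j / (A i - A j)) * (A i / (B - A i)))
        + (∏ i ∈ Icc 1 n, A i / (A 0 - A i)) *
          ((A 0 / (B - A 0)) ^ 2 +
            (∑ l ∈ Icc 1 n, A 0 / (A l - A 0)) * (A 0 / (B - A 0))) := by
        rw [mul_add]
        congr 1
        · rw [Finset.mul_sum]
          refine Finset.sum_congr rfl fun i hi => ?_
          simp only [div_eq_mul_inv]
          rw [Finset.prod_mul_distrib, ← Finset.mul_prod_erase (Icc 1 n) A hi]
          ring
        · simp only [div_eq_mul_inv]
          rw [Finset.prod_mul_distrib, ← Finset.mul_sum]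
          ring
end

section
/- Let A_0, A_1, ..., A_n be nonzero pairwise distinct complex numbers and let x be a nonzero complex number with A_i x ≠ 1 for all i. Then (1/(1-A_0 x))^2 · ∏_{j=1}^n 1/(1-A_j x) = ∑_{i=1}^n (A_i/(A_i-A_0))^2 · (∏_{1≤j≤n, j≠i} A_i/(A_i-A_j)) · 1/(1-A_i x) + (∏_{i=1}^n A_0/(A_0-A_i)) · [ A_0 x/(1-A_0 x)^2 + (1 + ∑_{l=1}^n A_l/(A_l-A_0)) · 1/(1-A_0 x) ]. -/
open Finset

set_option maxHeartbeats 3200000 in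
private theorem aux (n : ℕ) (hn : 1 ≤ n) : ∀ A : ℕ → ℂ,
    (∀ i ≤ n, A i ≠ 0) → (∀ i ≤ n, ∀ j ≤ n, i ≠ j → A i ≠ A j) →
    ∀ x : ℂ, x ≠ 0 → (∀ i ≤ n, A i * x ≠ 1) →
    (1 / (1 - A 0 * x)) ^ 2 * ∏ j ∈ Icc 1 n, 1 / (1 - A j * x)
      = (∑ i ∈ Icc 1 n, (A i / (A i - A 0)) ^ 2 *
          (∏ j ∈ (Icc 1 n).erase i, A i / (A i - A j)) * (1 / (1 - A i * x)))
        + (∏ i ∈ Icc 1 n, A 0 / (A 0 - A i)) *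
          (A 0 * x / (1 - A 0 * x) ^ 2 +
            (1 + ∑ l ∈ Icc 1 n, A l / (A l - A 0)) * (1 / (1 - A 0 * x))) := by
  induction n, hn using Nat.le_induction with
  | base =>
    intro A hA0 hAA x hx hAx
    have h0 : (1:ℂ) - A 0 * x ≠ 0 := sub_ne_zero.mpr fun h => hAx 0 (by omega) h.symm
    have h1 : (1:ℂ) - A 1 * x ≠ 0 := sub_ne_zero.mpr fun h => hAx 1 le_rfl h.symm
    have h10 : A 1 - A 0 ≠ 0 := sub_ne_zero.mpr (hAA 1 le_rfl 0 (by omega) one_ne_zero)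
    have h01 : A 0 - A 1 ≠ 0 := sub_ne_zero.mpr (hAA 0 (by omega) 1 le_rfl zero_ne_one)
    simp only [Icc_self, prod_singleton, sum_singleton, erase_singleton, prod_empty, mul_one]
    have hu : (1 - A 0 * x) * (1 / (1 - A 0 * x)) = 1 := by field_simp
    have haux : A 0 * x / (1 - A 0 * x) ^ 2 = A 0 * x * (1 / (1 - A 0 * x)) ^ 2 := by
      rw [div_pow, one_pow, mul_one_div]
    have L1 : (1 / (1 - A 0 * x)) * (1 / (1 - A 1 * x))
        = A 0 / (A 0 - A 1) * (1 / (1 - A 0 * x)) + A 1 / (A 1 - A 0) * (1 / (1 - A 1 * x)) := by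
      rw [div_mul_div_comm, div_mul_div_comm, div_mul_div_comm, div_add_div _ _ (mul_ne_zero h01 h0) (mul_ne_zero h10 h1), div_eq_div_iff (mul_ne_zero h0 h1) (mul_ne_zero (mul_ne_zero h01 h0) (mul_ne_zero h10 h1))]
      ring
    linear_combination (1 / (1 - A 0 * x) + A 1 / (A 1 - A 0)) * L1
      + (A 0 / (A 0 - A 1)) * (1 / (1 - A 0 * x)) * hu
      - (A 0 / (A 0 - A 1)) * haux
  | succ n hn IH =>
    intro A hA0 hAA x hx hAx
    have hsub : ∀ i ≤ n + 1, (1:ℂ) - A i * x ≠ 0 :=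
      fun i hi => sub_ne_zero.mpr fun h => hAx i hi h.symm
    have hAAne : ∀ i ≤ n + 1, ∀ j ≤ n + 1, i ≠ j → A i - A j ≠ 0 :=
      fun i hi j hj hij => sub_ne_zero.mpr (hAA i hi j hj hij)
    have hv0 : A (n+1) ≠ 0 := hA0 _ le_rfl
    have h0x : (1:ℂ) - A 0 * x ≠ 0 := hsub 0 (by omega)
    have hvx : (1:ℂ) - A (n+1) * x ≠ 0 := hsub (n+1) le_rfl
    have hv0' : A (n+1) - A 0 ≠ 0 := hAAne (n+1) le_rfl 0 (by omega) (by omega)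
    have h0v : A 0 - A (n+1) ≠ 0 := hAAne 0 (by omega) (n+1) le_rfl (by omega)
    -- IH at x
    have IHx := IH A (fun i hi => hA0 i (by omega))
      (fun i hi j hj h => hAA i (by omega) j (by omega) h) x hx (fun i hi => hAx i (by omega))
    -- IH at (A (n+1))⁻¹
    have hy0 : (A (n+1))⁻¹ ≠ 0 := inv_ne_zero hv0
    have hyAx : ∀ i ≤ n, A i * (A (n+1))⁻¹ ≠ 1 := by
      intro i hi h
      apply hAA i (by omega) (n+1) le_rfl (by omega)
      field_simp at h
      exact h
    have IHy := IH A (fun i hi => hA0 i (by omega))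
      (fun i hi j hj h => hAA i (by omega) j (by omega) h) (A (n+1))⁻¹ hy0 hyAx
    have e1 : ∀ c : ℂ, A (n+1) - c ≠ 0 →
        1 / (1 - c * (A (n+1))⁻¹) = A (n+1) / (A (n+1) - c) := by
      intro c hc; field_simp
    have e2 : A 0 * (A (n+1))⁻¹ / (1 - A 0 * (A (n+1))⁻¹) ^ 2
        = A 0 * A (n+1) * (1 / (A (n+1) - A 0)) ^ 2 := by
      field_simp
    have ep : ∏ j ∈ Icc 1 n, 1 / (1 - A j * (A (n+1))⁻¹)
        = ∏ j ∈ Icc 1 n, A (n+1) / (A (n+1) - A j) := by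
      refine prod_congr rfl fun j hj => ?_
      obtain ⟨h1j, hjn⟩ := mem_Icc.mp hj
      exact e1 (A j) (hAAne (n+1) le_rfl j (by omega) (by omega))
    have es : (∑ i ∈ Icc 1 n, (A i / (A i - A 0)) ^ 2 *
          (∏ j ∈ (Icc 1 n).erase i, A i / (A i - A j)) * (1 / (1 - A i * (A (n+1))⁻¹)))
        = ∑ i ∈ Icc 1 n, (A i / (A i - A 0)) ^ 2 *
          (∏ j ∈ (Icc 1 n).erase i, A i / (A i - A j)) * (A (n+1) / (A (n+1) - A i)) := by
      refine sum_congr rfl fun i hi => ?_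
      obtain ⟨h1i, hin⟩ := mem_Icc.mp hi
      rw [e1 (A i) (hAAne (n+1) le_rfl i (by omega) (by omega))]
    rw [ep, es, e2, e1 (A 0) hv0'] at IHy
    -- split sums/products over Icc 1 (n+1)
    have hprod : ∏ j ∈ Icc 1 (n+1), 1 / (1 - A j * x)
        = (∏ j ∈ Icc 1 n, 1 / (1 - A j * x)) * (1 / (1 - A (n+1) * x)) :=
      prod_Icc_succ_top (by omega) _
    have hprod2 : ∏ i ∈ Icc 1 (n+1), A 0 / (A 0 - A i)
        = (∏ i ∈ Icc 1 n, A 0 / (A 0 - A i)) * (A 0 / (A 0 - A (n+1))) :=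
      prod_Icc_succ_top (by omega) _
    have hsum2 : ∑ l ∈ Icc 1 (n+1), A l / (A l - A 0)
        = (∑ l ∈ Icc 1 n, A l / (A l - A 0)) + A (n+1) / (A (n+1) - A 0) :=
      sum_Icc_succ_top (by omega) _
    have hbig : (∑ i ∈ Icc 1 (n+1), (A i / (A i - A 0)) ^ 2 *
          (∏ j ∈ (Icc 1 (n+1)).erase i, A i / (A i - A j)) * (1 / (1 - A i * x)))
        = (∑ i ∈ Icc 1 n, (A i / (A i - A 0)) ^ 2 *
            (∏ j ∈ (Icc 1 n).erase i, A i / (A i - A j)) * (A i / (A i - A (n+1)))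
            * (1 / (1 - A i * x)))
          + (A (n+1) / (A (n+1) - A 0)) ^ 2 *
            (∏ j ∈ Icc 1 n, A (n+1) / (A (n+1) - A j)) * (1 / (1 - A (n+1) * x)) := by
      rw [sum_Icc_succ_top (by omega)]
      congr 1
      · refine sum_congr rfl fun i hi => ?_
        obtain ⟨h1i, hin⟩ := mem_Icc.mp hi
        have hset : (Icc 1 (n+1)).erase i = insert (n+1) ((Icc 1 n).erase i) := by
          ext k; simp only [mem_erase, mem_Icc, mem_insert]; omega
        have hnotmem : (n+1) ∉ (Icc 1 n).erase i := by
          simp only [mem_erase, mem_Icc]; omega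
        rw [hset, prod_insert hnotmem]
        ring
      · have hset : (Icc 1 (n+1)).erase (n+1) = Icc 1 n := by
          ext k; simp only [mem_erase, mem_Icc]; omega
        rw [hset]
    have hsum : (∑ i ∈ Icc 1 n, (A i / (A i - A 0)) ^ 2 *
            (∏ j ∈ (Icc 1 n).erase i, A i / (A i - A j)) * (1 / (1 - A i * x)))
          * (1 / (1 - A (n+1) * x))
        = (∑ i ∈ Icc 1 n, (A i / (A i - A 0)) ^ 2 *
            (∏ j ∈ (Icc 1 n).erase i, A i / (A i - A j)) * (A i / (A i - A (n+1)))
            * (1 / (1 - A i * x)))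
          + (∑ i ∈ Icc 1 n, (A i / (A i - A 0)) ^ 2 *
            (∏ j ∈ (Icc 1 n).erase i, A i / (A i - A j)) * (A (n+1) / (A (n+1) - A i)))
            * (1 / (1 - A (n+1) * x)) := by
      rw [sum_mul, sum_mul, ← sum_add_distrib]
      refine sum_congr rfl fun i hi => ?_
      obtain ⟨h1i, hin⟩ := mem_Icc.mp hi
      have hiv : A i - A (n+1) ≠ 0 := hAAne i (by omega) (n+1) le_rfl (by omega)
      have hvi : A (n+1) - A i ≠ 0 := hAAne (n+1) le_rfl i (by omega) (by omega)
      have hix : (1:ℂ) - A i * x ≠ 0 := hsub i (by omega)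
      have L1 : (1 / (1 - A i * x)) * (1 / (1 - A (n+1) * x))
          = A i / (A i - A (n+1)) * (1 / (1 - A i * x))
            + A (n+1) / (A (n+1) - A i) * (1 / (1 - A (n+1) * x)) := by
        rw [div_mul_div_comm, div_mul_div_comm, div_mul_div_comm, div_add_div _ _ (mul_ne_zero hiv hix) (mul_ne_zero hvi hvx), div_eq_div_iff (mul_ne_zero hix hvx) (mul_ne_zero (mul_ne_zero hiv hix) (mul_ne_zero hvi hvx))]
        ring
      linear_combination ((A i / (A i - A 0)) ^ 2 *
        (∏ j ∈ (Icc 1 n).erase i, A i / (A i - A j))) * L1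
    have hu : (1 - A 0 * x) * (1 / (1 - A 0 * x)) = 1 := by field_simp
    have ht : (1 - A (n+1) * x) * (1 / (1 - A (n+1) * x)) = 1 := by field_simp
    have hp : (A (n+1) - A 0) * (1 / (A (n+1) - A 0)) = 1 := by field_simp
    have hq : (A 0 - A (n+1)) * (1 / (A 0 - A (n+1))) = 1 := by field_simp
    have haux : A 0 * x / (1 - A 0 * x) ^ 2 = A 0 * x * (1 / (1 - A 0 * x)) ^ 2 := by
      rw [div_pow, one_pow, mul_one_div]
    have L1a : (1 / (1 - A 0 * x)) * (1 / (1 - A (n+1) * x))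
        = A 0 / (A 0 - A (n+1)) * (1 / (1 - A 0 * x))
          + A (n+1) / (A (n+1) - A 0) * (1 / (1 - A (n+1) * x)) := by
      rw [div_mul_div_comm, div_mul_div_comm, div_mul_div_comm, div_add_div _ _ (mul_ne_zero h0v h0x) (mul_ne_zero hv0' hvx), div_eq_div_iff (mul_ne_zero h0x hvx) (mul_ne_zero (mul_ne_zero h0v h0x) (mul_ne_zero hv0' hvx))]
      ring
    have hP : (A 0 * x / (1 - A 0 * x) ^ 2
          + (1 + ∑ l ∈ Icc 1 n, A l / (A l - A 0)) * (1 / (1 - A 0 * x)))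
          * (1 / (1 - A (n+1) * x))
        = (A 0 * A (n+1) * (1 / (A (n+1) - A 0)) ^ 2
            + (1 + ∑ l ∈ Icc 1 n, A l / (A l - A 0)) * (A (n+1) / (A (n+1) - A 0)))
          * (1 / (1 - A (n+1) * x))
          + (A 0 / (A 0 - A (n+1))) * (A 0 * x / (1 - A 0 * x) ^ 2
            + (1 + ((∑ l ∈ Icc 1 n, A l / (A l - A 0)) + A (n+1) / (A (n+1) - A 0)))
              * (1 / (1 - A 0 * x))) := by
      linear_combination
        (A 0 * x * (1 / (1 - A 0 * x) + A (n+1) / (A (n+1) - A 0))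
          + (1 + ∑ l ∈ Icc 1 n, A l / (A l - A 0))) * L1a
        - (A 0 / (A 0 - A (n+1)) * (A (n+1) / (A (n+1) - A 0))) * hu
        - (A 0 * A (n+1) * (1 / (A (n+1) - A 0)) ^ 2) * ht
        + (A 0 * A (n+1) * (1 / (A (n+1) - A 0)) * (1 / (A 0 - A (n+1)))) * hp
        + (A 0 * A (n+1) * (1 / (A (n+1) - A 0)) ^ 2) * hq
        + (1 / (1 - A (n+1) * x) - A 0 / (A 0 - A (n+1))) * haux
    linear_combination (1 / (1 - A 0 * x)) ^ 2 * hprod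
      + (1 / (1 - A (n+1) * x)) * IHx
      + hsum
      - (1 / (1 - A (n+1) * x)) * IHy
      + (∏ i ∈ Icc 1 n, A 0 / (A 0 - A i)) * hP
      - hbig
      - (A 0 * x / (1 - A 0 * x) ^ 2
          + (1 + ∑ l ∈ Icc 1 (n+1), A l / (A l - A 0)) * (1 / (1 - A 0 * x))) * hprod2
      - ((∏ i ∈ Icc 1 n, A 0 / (A 0 - A i)) * (A 0 / (A 0 - A (n+1)))
          * (1 / (1 - A 0 * x))) * hsum2

theorem stmt2 (n : ℕ) (hn : 1 ≤ n) (x : ℂ) (A : ℕ → ℂ)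
    (hx : x ≠ 0) (hA0 : ∀ i ≤ n, A i ≠ 0)
    (hAx : ∀ i ≤ n, A i * x ≠ 1)
    (hAA : ∀ i ≤ n, ∀ j ≤ n, i ≠ j → A i ≠ A j) :
    (1 / (1 - A 0 * x)) ^ 2 * ∏ j ∈ Icc 1 n, 1 / (1 - A j * x)
      = (∑ i ∈ Icc 1 n, (A i / (A i - A 0)) ^ 2 *
          (∏ j ∈ (Icc 1 n).erase i, A i / (A i - A j)) * (1 / (1 - A i * x)))
        + (∏ i ∈ Icc 1 n, A 0 / (A 0 - A i)) *
          (A 0 * x / (1 - A 0 * x) ^ 2 +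
            (1 + ∑ l ∈ Icc 1 n, A l / (A l - A 0)) * (1 / (1 - A 0 * x))) :=
  aux n hn A hA0 hAA x hx hAx
end

section
/- Define the δ-function formal distribution δ(y) = ∑_{n∈ℤ} y^n, viewed as a formal sum of Laurent series, and for a nonzero complex number A write, as rational-function expansions, 1/(1-Ax) = ∑_{n≥0} (Ax)^n and A^{-1}x^{-1}/(1-A^{-1}x^{-1}) = ∑_{n≥1} (Ax)^{-n}. Then for pairwise distinct nonzero complex numbers A_1, ..., A_n: ∏_{i=1}^n 1/(1-A_i x) − (−1)^n ∏_{i=1}^n A_i^{-1}x^{-1}/(1-A_i^{-1}x^{-1}) = ∑_{i=1}^n (∏_{1≤j≤n, j≠i} A_i/(A_i−A_j)) · δ(A_i x), as an identity of formal distributions in x (i.e. comparing the coefficient of x^m on both sides for every integer m). -/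
open Finset Polynomial PowerSeries

private lemma deg_lt_of_natDegree_lt4 {p : ℂ[X]} {N : ℕ} (h : p.natDegree < N) : p.degree < N :=
  lt_of_le_of_lt degree_le_natDegree (by exact_mod_cast h)

/-- geometric series -/
private noncomputable def geo4 (a : ℂ) : PowerSeries ℂ := PowerSeries.mk fun k => a ^ k

private lemma one_sub_mul_geo4 (a : ℂ) :
    ((1 : ℂ⟦X⟧) - PowerSeries.C a * PowerSeries.X) * geo4 a = 1 := by
  ext k
  rw [sub_mul, one_mul, map_sub, mul_assoc, PowerSeries.coeff_C_mul]
  cases k with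
  | zero => simp [geo4]
  | succ k => simp [geo4, PowerSeries.coeff_succ_X_mul, pow_succ, mul_comm]

/-- partial fraction unity: `∑ i, c i * ∏_{j≠i} (1 - A j X) = 1` -/
private lemma pf_unity4 {n : ℕ} (hn : 1 ≤ n) (A : Fin n → ℂ) (h0 : ∀ i, A i ≠ 0)
    (hinj : Function.Injective A) :
    ∑ i, Polynomial.C (∏ j ∈ Finset.univ.erase i, A i / (A i - A j)) *
      ∏ j ∈ Finset.univ.erase i, (1 - Polynomial.C (A j) * Polynomial.X) = (1 : ℂ[X]) := by
  have hcard : (Finset.univ : Finset (Fin n)).card = n := by simp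
  have hsub : ∀ {i j : Fin n}, j ≠ i → A i - A j ≠ 0 := fun h =>
    sub_ne_zero.mpr fun hh => h (hinj hh).symm
  have hnd : ∀ i : Fin n,
      (Polynomial.C (∏ j ∈ Finset.univ.erase i, A i / (A i - A j)) *
        ∏ j ∈ Finset.univ.erase i, (1 - Polynomial.C (A j) * Polynomial.X)).natDegree ≤ n - 1 := by
    intro i
    refine le_trans natDegree_mul_le ?_
    rw [natDegree_C, zero_add]
    refine le_trans (natDegree_prod_le _ _) ?_
    refine le_trans (Finset.sum_le_card_nsmul _ _ 1 fun j _ => ?_) ?_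
    · refine le_trans (natDegree_sub_le _ _) ?_
      simp only [natDegree_one, max_le_iff]
      exact ⟨Nat.zero_le _, le_trans natDegree_mul_le (by simp)⟩
    · rw [Finset.card_erase_of_mem (Finset.mem_univ i), smul_eq_mul, mul_one]
      simp
  apply Polynomial.eq_of_degrees_lt_of_eval_index_eq (v := fun i => (A i)⁻¹) Finset.univ
  · intro i _ j _ h
    exact hinj (inv_injective h)
  · rw [hcard]
    refine lt_of_le_of_lt (Polynomial.degree_sum_le _ _) ?_
    rw [Finset.sup_lt_iff (by exact_mod_cast WithBot.bot_lt_coe n)]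
    intro i _
    exact deg_lt_of_natDegree_lt4 (lt_of_le_of_lt (hnd i) (by omega))
  · rw [hcard]
    exact deg_lt_of_natDegree_lt4 (by simpa using (by omega : 0 < n))
  · intro t _
    rw [eval_one, eval_finset_sum]
    rw [Finset.sum_eq_single t]
    · rw [eval_mul, eval_C, eval_prod, ← Finset.prod_mul_distrib]
      refine Finset.prod_eq_one fun j hj => ?_
      have hjt : j ≠ t := Finset.ne_of_mem_erase hj
      have h1 : A t - A j ≠ 0 := hsub hjt
      simp only [eval_sub, eval_one, eval_mul, eval_C, eval_X]
      field_simp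
      rw [mul_sub, mul_one, mul_comm (A t) (A j / A t), div_mul_cancel₀ _ (h0 t)]
    · intro i _ hit
      rw [eval_mul, eval_prod]
      refine mul_eq_zero_of_right _ (Finset.prod_eq_zero
        (Finset.mem_erase.mpr ⟨hit.symm, Finset.mem_univ t⟩) ?_)
      simp [mul_inv_cancel₀ (h0 t)]
    · intro h; exact absurd (Finset.mem_univ t) h

/-- Lagrange vanishing: `∑ i, A i ^ e / ∏_{j≠i} (A i - A j) = 0` for `e + 1 < n`. -/
private lemma lag_vanish4 {n : ℕ} (A : Fin n → ℂ) (hinj : Function.Injective A)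
    {e : ℕ} (he : e + 1 < n) :
    ∑ i, A i ^ e * (∏ j ∈ Finset.univ.erase i, (A i - A j))⁻¹ = 0 := by
  have hsub : ∀ {i j : Fin n}, j ≠ i → A i - A j ≠ 0 := fun h =>
    sub_ne_zero.mpr fun hh => h (hinj hh).symm
  have hcard : (Finset.univ : Finset (Fin n)).card = n := by simp
  have hce : ∀ i : Fin n, (Finset.univ.erase i).card = n - 1 := by
    intro i; rw [Finset.card_erase_of_mem (Finset.mem_univ i)]; simp
  have hmon : ∀ i : Fin n, (∏ j ∈ Finset.univ.erase i, (Polynomial.X - Polynomial.C (A j))).Monic :=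
    fun i => monic_prod_of_monic _ _ fun j _ => monic_X_sub_C (A j)
  have hdeg : ∀ i : Fin n,
      (∏ j ∈ Finset.univ.erase i, (Polynomial.X - Polynomial.C (A j))).natDegree = n - 1 := by
    intro i
    rw [Polynomial.natDegree_prod _ _ fun j _ => X_sub_C_ne_zero (A j)]
    simp [hce i]
  have key : ∑ i, Polynomial.C (A i ^ e * (∏ j ∈ Finset.univ.erase i, (A i - A j))⁻¹) *
      ∏ j ∈ Finset.univ.erase i, (Polynomial.X - Polynomial.C (A j))
      = (Polynomial.X : ℂ[X]) ^ e := by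
    apply Polynomial.eq_of_degrees_lt_of_eval_index_eq (v := A) Finset.univ hinj.injOn
    · rw [hcard]
      refine lt_of_le_of_lt (Polynomial.degree_sum_le _ _) ?_
      rw [Finset.sup_lt_iff (by exact_mod_cast WithBot.bot_lt_coe n)]
      intro i _
      refine deg_lt_of_natDegree_lt4 (lt_of_le_of_lt natDegree_mul_le ?_)
      rw [natDegree_C, zero_add, hdeg i]
      omega
    · rw [hcard]
      exact deg_lt_of_natDegree_lt4 (by simpa using (by omega : e < n))
    · intro t _
      rw [eval_pow, eval_X, eval_finset_sum]
      rw [Finset.sum_eq_single t]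
      · rw [eval_mul, eval_C, eval_prod]
        simp only [eval_sub, eval_X, eval_C]
        rw [mul_assoc, inv_mul_cancel₀ (Finset.prod_ne_zero_iff.mpr
          fun j hj => hsub (Finset.ne_of_mem_erase hj)), mul_one]
      · intro i _ hit
        rw [eval_mul, eval_prod]
        refine mul_eq_zero_of_right _ (Finset.prod_eq_zero
          (Finset.mem_erase.mpr ⟨hit.symm, Finset.mem_univ t⟩) ?_)
        simp
      · intro h; exact absurd (Finset.mem_univ t) h
  have := congrArg (fun p => Polynomial.coeff p (n - 1)) key
  simp only [Polynomial.finset_sum_coeff, Polynomial.coeff_C_mul, Polynomial.coeff_X_pow] at this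
  rw [if_neg (by omega)] at this
  rw [← this]
  refine Finset.sum_congr rfl fun i _ => ?_
  rw [← hdeg i, Polynomial.Monic.coeff_natDegree (hmon i), mul_one]

private lemma prod_geo_eq4 {n : ℕ} (hn : 1 ≤ n) (A : Fin n → ℂ) (h0 : ∀ i, A i ≠ 0)
    (hinj : Function.Injective A) :
    ∏ i, geo4 (A i) = ∑ i, PowerSeries.C (∏ j ∈ Finset.univ.erase i, A i / (A i - A j))
      * geo4 (A i) := by
  have hps : ∑ i, PowerSeries.C (∏ j ∈ Finset.univ.erase i, A i / (A i - A j)) *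
      ∏ j ∈ Finset.univ.erase i, ((1 : ℂ⟦X⟧) - PowerSeries.C (A j) * PowerSeries.X)
      = (1 : ℂ⟦X⟧) := by
    have := congrArg (Polynomial.coeToPowerSeries.ringHom (R := ℂ)) (pf_unity4 hn A h0 hinj)
    simpa [map_sum, map_prod, map_sub, map_mul, map_one] using this
  calc ∏ i, geo4 (A i) = (∑ i, PowerSeries.C (∏ j ∈ Finset.univ.erase i, A i / (A i - A j)) *
      ∏ j ∈ Finset.univ.erase i, ((1 : ℂ⟦X⟧) - PowerSeries.C (A j) * PowerSeries.X))
        * ∏ i, geo4 (A i) := by rw [hps, one_mul]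
    _ = _ := by
        rw [Finset.sum_mul]
        refine Finset.sum_congr rfl fun i _ => ?_
        rw [mul_assoc]
        congr 1
        rw [← Finset.prod_erase_mul Finset.univ _ (Finset.mem_univ i), ← mul_assoc,
          ← Finset.prod_mul_distrib,
          Finset.prod_congr rfl fun j _ => one_sub_mul_geo4 (A j),
          Finset.prod_const_one, one_mul]

private lemma coeff_prod_geo4 {n : ℕ} (A : Fin n → ℂ) (d : ℕ) :
    PowerSeries.coeff d (∏ i, geo4 (A i)) =
      ∑ k ∈ Finset.Nat.antidiagonalTuple n d, ∏ i, A i ^ k i := by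
  rw [PowerSeries.coeff_prod]
  refine Finset.sum_nbij' (fun l => ⇑l) (fun k => Finsupp.equivFunOnFinite.symm k) ?_ ?_ ?_ ?_ ?_
  · intro l hl
    rw [Finset.mem_finsuppAntidiag] at hl
    rw [Finset.Nat.mem_antidiagonalTuple]
    exact hl.1
  · intro k hk
    rw [Finset.Nat.mem_antidiagonalTuple] at hk
    rw [Finset.mem_finsuppAntidiag]
    exact ⟨by simpa using hk, Finset.subset_univ _⟩
  · intro l _; exact Finsupp.equivFunOnFinite.symm_apply_apply l
  · intro k _; rfl
  · intro l _
    exact Finset.prod_congr rfl fun i _ => by rw [geo4, PowerSeries.coeff_mk]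

/-- the complete homogeneous / partial fraction identity -/
private lemma h_formula4 {n : ℕ} (hn : 1 ≤ n) (A : Fin n → ℂ) (h0 : ∀ i, A i ≠ 0)
    (hinj : Function.Injective A) (d : ℕ) :
    ∑ k ∈ Finset.Nat.antidiagonalTuple n d, ∏ i, A i ^ k i
      = ∑ i, (∏ j ∈ Finset.univ.erase i, A i / (A i - A j)) * A i ^ d := by
  rw [← coeff_prod_geo4, prod_geo_eq4 hn A h0 hinj, map_sum]
  refine Finset.sum_congr rfl fun i _ => ?_
  rw [PowerSeries.coeff_C_mul, geo4, PowerSeries.coeff_mk]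

private lemma transform_i4 {n : ℕ} (hn : 1 ≤ n) (A : Fin n → ℂ) (h0 : ∀ i, A i ≠ 0)
    (hinj : Function.Injective A) (i : Fin n) (m : ℤ) (d : ℕ) (hd : (d : ℤ) = -m - n) :
    -(-1:ℂ)^n * ((∏ j, (A j)⁻¹) *
      ((∏ j ∈ Finset.univ.erase i, (A i)⁻¹ / ((A i)⁻¹ - (A j)⁻¹)) * ((A i)⁻¹) ^ d))
    = (∏ j ∈ Finset.univ.erase i, A i / (A i - A j)) * A i ^ m := by
  have hAi := h0 i
  have hsub : ∀ j ∈ Finset.univ.erase i, A i - A j ≠ 0 := fun j hj =>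
    sub_ne_zero.mpr fun hh => (Finset.ne_of_mem_erase hj) (hinj hh).symm
  have hP : (∏ j ∈ Finset.univ.erase i, (A i - A j)) ≠ 0 := Finset.prod_ne_zero_iff.mpr hsub
  have hce : (Finset.univ.erase i).card = n - 1 := by
    rw [Finset.card_erase_of_mem (Finset.mem_univ i)]; simp
  have hb : ∀ j ∈ Finset.univ.erase i,
      (A i)⁻¹ / ((A i)⁻¹ - (A j)⁻¹) = -1 * (A j / (A i - A j)) := by
    intro j hj
    have hj0 := h0 j
    have := hsub j hj
    have hji : A j - A i ≠ 0 := sub_ne_zero.mpr fun hh => (Finset.ne_of_mem_erase hj) (hinj hh)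
    field_simp
    ring
  rw [Finset.prod_congr rfl hb, Finset.prod_mul_distrib, Finset.prod_const, hce]
  have hcA : (∏ j ∈ Finset.univ.erase i, A i / (A i - A j))
      = A i ^ (n - 1) / ∏ j ∈ Finset.univ.erase i, (A i - A j) := by
    rw [Finset.prod_div_distrib, Finset.prod_const, hce]
  rw [hcA]
  have hprodinv : (∏ j, (A j)⁻¹) = (A i)⁻¹ * ∏ j ∈ Finset.univ.erase i, (A j)⁻¹ := by
    rw [← Finset.mul_prod_erase Finset.univ _ (Finset.mem_univ i)]
  rw [hprodinv]
  have hprodAj : (∏ j ∈ Finset.univ.erase i, (A j)⁻¹) *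
      (∏ j ∈ Finset.univ.erase i, A j / (A i - A j))
      = (∏ j ∈ Finset.univ.erase i, (A i - A j))⁻¹ := by
    rw [← Finset.prod_mul_distrib]
    rw [Finset.prod_congr rfl fun j hj => show (A j)⁻¹ * (A j / (A i - A j)) = (A i - A j)⁻¹ by
      have h1 := h0 j
      have h2 := hsub j hj
      field_simp]
    rw [← Finset.prod_inv_distrib]
  have hsign : -(-1:ℂ)^n * (-1:ℂ)^(n-1) = 1 := by
    have h1 : -(-1:ℂ)^n = (-1:ℂ)^(n+1) := by rw [pow_succ]; ring
    rw [h1, ← pow_add]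
    have h2 : n + 1 + (n - 1) = 2 * n := by omega
    rw [h2, pow_mul]
    norm_num
  have hz : (A i)⁻¹ * ((A i)⁻¹)^d = A i ^ (n - 1) * A i ^ m := by
    rw [inv_pow, ← zpow_natCast (A i) d, ← zpow_neg, ← zpow_natCast (A i) (n-1),
      ← zpow_neg_one, ← zpow_add₀ hAi, ← zpow_add₀ hAi]
    congr 1
    omega
  calc -(-1:ℂ)^n * (((A i)⁻¹ * ∏ j ∈ Finset.univ.erase i, (A j)⁻¹) *
        (((-1:ℂ)^(n-1) * ∏ j ∈ Finset.univ.erase i, A j / (A i - A j)) * ((A i)⁻¹) ^ d))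
      = (-(-1:ℂ)^n * (-1:ℂ)^(n-1)) * (((∏ j ∈ Finset.univ.erase i, (A j)⁻¹) *
          (∏ j ∈ Finset.univ.erase i, A j / (A i - A j))) * ((A i)⁻¹ * ((A i)⁻¹) ^ d)) := by
        ring
    _ = (∏ j ∈ Finset.univ.erase i, (A i - A j))⁻¹ * (A i ^ (n - 1) * A i ^ m) := by
        rw [hsign, hprodAj, hz, one_mul]
    _ = A i ^ (n - 1) / (∏ j ∈ Finset.univ.erase i, (A i - A j)) * A i ^ m := by
        rw [div_eq_mul_inv]; ring

theorem stmt4 (n : ℕ) (hn : 1 ≤ n) (A : Fin n → ℂ)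
    (h0 : ∀ i, A i ≠ 0) (hinj : Function.Injective A) (m : ℤ) :
    (if 0 ≤ m then
        ∑ k ∈ Finset.Nat.antidiagonalTuple n m.toNat, ∏ i, A i ^ k i
      else 0)
      - (-1 : ℂ) ^ n *
        (if m + (n : ℤ) ≤ 0 then
            ∑ k ∈ Finset.Nat.antidiagonalTuple n ((-m).toNat - n), ∏ i,
              A i ^ (-(1 + (k i : ℤ)))
          else 0)
      = ∑ i, (∏ j ∈ Finset.univ.erase i, A i / (A i - A j)) * A i ^ m := by
  by_cases h1 : 0 ≤ m
  · rw [if_pos h1, if_neg (by omega), mul_zero, sub_zero]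
    rw [h_formula4 hn A h0 hinj m.toNat]
    refine Finset.sum_congr rfl fun i _ => ?_
    congr 1
    rw [← zpow_natCast (A i) m.toNat, Int.toNat_of_nonneg h1]
  · by_cases h2 : m + (n : ℤ) ≤ 0
    · rw [if_neg h1, if_pos h2]
      set B : Fin n → ℂ := fun j => (A j)⁻¹ with hB
      have hB0 : ∀ j, B j ≠ 0 := fun j => inv_ne_zero (h0 j)
      have hBinj : Function.Injective B := fun a b hab => hinj (inv_injective hab)
      set d : ℕ := (-m).toNat - n with hdd
      have hd : (d : ℤ) = -m - n := by omega
      have hS : ∀ k : Fin n → ℕ, (∏ i, A i ^ (-(1 + (k i : ℤ))))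
          = (∏ i, B i) * ∏ i, B i ^ k i := by
        intro k
        rw [← Finset.prod_mul_distrib]
        refine Finset.prod_congr rfl fun i _ => ?_
        have : (-(1 + (k i : ℤ))) = -((1 + k i : ℕ) : ℤ) := by push_cast; ring
        rw [this, zpow_neg, zpow_natCast, ← inv_pow, pow_add, pow_one]
      rw [Finset.sum_congr rfl fun k _ => hS k, ← Finset.mul_sum,
        h_formula4 hn B hB0 hBinj d]
      rw [Finset.mul_sum, Finset.mul_sum, zero_sub, ← Finset.sum_neg_distrib]
      refine Finset.sum_congr rfl fun i _ => ?_
      rw [← neg_mul]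
      exact transform_i4 hn A h0 hinj i m d hd
    · rw [if_neg h1, if_neg h2, mul_zero, sub_zero]
      set e : ℕ := (m + n - 1).toNat with hee
      have he : (e : ℤ) = m + n - 1 := by omega
      have hel : e + 1 < n := by omega
      rw [eq_comm, ← lag_vanish4 A hinj hel]
      refine Finset.sum_congr rfl fun i _ => ?_
      have hce : (Finset.univ.erase i).card = n - 1 := by
        rw [Finset.card_erase_of_mem (Finset.mem_univ i)]; simp
      rw [Finset.prod_div_distrib, Finset.prod_const, hce, div_eq_mul_inv]
      have hz : A i ^ (n - 1) * A i ^ m = A i ^ e := by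
        rw [← zpow_natCast (A i) (n-1), ← zpow_natCast (A i) e, ← zpow_add₀ (h0 i)]
        congr 1
        omega
      rw [← hz]
      ring
end

section
/- Let G be an abelian group with character σ: G → ℂ^×, R_σ the skew Laurent polynomial ring with basis t^m e^α and relation e^α t = σ(α) t e^α, and |σ| the order of the subgroup σ(G) of ℂ^× (set |σ|ℤ = 0 if |σ| = ∞). Let Λ_σ = {(m, α) ∈ ℤ × G : m ∈ |σ|ℤ, α ∈ ker σ}. Then the center Z_σ of R_σ has ℂ-basis {t^m e^α : (m, α) ∈ Λ_σ}, and the ℂ-span of the commutators [R_σ, R_σ] has ℂ-basis {t^m e^α : (m, α) ∉ Λ_σ}; consequently R_σ = [R_σ, R_σ] ⊕ Z_σ as ℂ-vector spaces. -/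
/-- with `R_σ` the skew Laurent polynomial ring (modelled as a
ℂ-algebra `A` with basis `b (m,α) = t^m e^α` and multiplication
`(t^m e^α)(t^n e^β) = σ(α)^n t^{m+n} e^{α+β}`), let
`Λ_σ = {(m,α) : σ(g)^m = 1 for all g, and σ(α) = 1}` (note `m ∈ |σ|ℤ` is
equivalent to `σ(g)^m = 1` for all `g ∈ G`).  Then the span of the monomials
`t^m e^α` with `(m,α) ∈ Λ_σ` is exactly the center of `R_σ`, the span of the
commutators `[R_σ, R_σ]` is the span of the monomials with `(m,α) ∉ Λ_σ`, and
`R_σ = [R_σ, R_σ] ⊕ Z_σ` as ℂ-vector spaces. -/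
theorem stmt9 (G : Type) [AddCommGroup G] (σ : G → ℂˣ)
    (hσ : ∀ α β : G, σ (α + β) = σ α * σ β)
    (A : Type) [Ring A] [Algebra ℂ A]
    (b : Module.Basis (ℤ × G) ℂ A)
    (hone : b (0, (0 : G)) = 1)
    (hmul : ∀ (m n : ℤ) (α β : G),
      b (m, α) * b (n, β) = ((σ α ^ n : ℂˣ) : ℂ) • b (m + n, α + β)) :
    Submodule.span ℂ
        (⇑b '' {p : ℤ × G | (∀ g : G, σ g ^ p.1 = 1) ∧ σ p.2 = 1})
      = Subalgebra.toSubmodule (Subalgebra.center ℂ A) ∧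
    Submodule.span ℂ {z : A | ∃ x y : A, z = x * y - y * x}
      = Submodule.span ℂ
          (⇑b '' {p : ℤ × G | (∀ g : G, σ g ^ p.1 = 1) ∧ σ p.2 = 1}ᶜ) ∧
    IsCompl (Submodule.span ℂ {z : A | ∃ x y : A, z = x * y - y * x})
      (Submodule.span ℂ
        (⇑b '' {p : ℤ × G | (∀ g : G, σ g ^ p.1 = 1) ∧ σ p.2 = 1})) := by
  set Λ : Set (ℤ × G) := {p : ℤ × G | (∀ g : G, σ g ^ p.1 = 1) ∧ σ p.2 = 1} with hΛdef
  set Cs : Set A := {z : A | ∃ x y : A, z = x * y - y * x} with hCdef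
  set N : Submodule ℂ A := Submodule.span ℂ (⇑b '' Λᶜ) with hNdef
  set Z : Submodule ℂ A := Submodule.span ℂ (⇑b '' Λ) with hZdef
  -- basic facts about σ
  have hσ0 : σ 0 = 1 := by
    have h := hσ 0 0
    rw [add_zero] at h
    exact left_eq_mul.mp h
  -- commutator of basis monomials
  have hcomm : ∀ p q : ℤ × G, b p * b q - b q * b p
      = (((σ p.2 ^ q.1 : ℂˣ) : ℂ) - ((σ q.2 ^ p.1 : ℂˣ) : ℂ)) • b (p.1 + q.1, p.2 + q.2) := by
    rintro ⟨m, α⟩ ⟨n, β⟩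
    rw [hmul, hmul, add_comm n m, add_comm β α, sub_smul]
  -- the coefficient vanishes when the target index is in Λ
  have hcoeff : ∀ p q : ℤ × G, (p.1 + q.1, p.2 + q.2) ∈ Λ →
      (σ p.2 ^ q.1 : ℂˣ) = σ q.2 ^ p.1 := by
    rintro ⟨m, α⟩ ⟨n, β⟩ ⟨h1, h2⟩
    have hβ : σ β = (σ α)⁻¹ := by
      have h := hσ α β
      rw [h2] at h
      exact (inv_eq_of_mul_eq_one_right h.symm).symm
    rw [hβ, inv_zpow]
    exact eq_inv_of_mul_eq_one_left (by rw [← zpow_add, add_comm]; exact h1 α)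
  -- witness for the center direction
  have hw1 : ∀ p : ℤ × G, p ∉ Λ → ∃ q : ℤ × G,
      ((σ p.2 ^ q.1 : ℂˣ) : ℂ) ≠ ((σ q.2 ^ p.1 : ℂˣ) : ℂ) := by
    rintro ⟨m, α⟩ hp
    by_cases h : ∀ g : G, σ g ^ m = 1
    · have hα : σ α ≠ 1 := fun hc => hp ⟨h, hc⟩
      refine ⟨(1, 0), ?_⟩
      simp only [zpow_one, hσ0, one_zpow, Units.val_one]
      exact fun hc => hα (Units.ext (by simpa using hc))
    · push_neg at h
      obtain ⟨g, hg⟩ := h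
      refine ⟨(0, g), ?_⟩
      simp only [zpow_zero, Units.val_one]
      exact fun hc => hg (Units.ext (by simpa using hc.symm))
  -- witness for the commutator direction: factorization of a monomial not in Λ
  have hw2 : ∀ p : ℤ × G, p ∉ Λ → ∃ q r : ℤ × G, q.1 + r.1 = p.1 ∧ q.2 + r.2 = p.2 ∧
      ((σ q.2 ^ r.1 : ℂˣ) : ℂ) ≠ ((σ r.2 ^ q.1 : ℂˣ) : ℂ) := by
    rintro ⟨m, α⟩ hp
    by_cases h : ∀ g : G, σ g ^ m = 1
    · have hα : σ α ≠ 1 := fun hc => hp ⟨h, hc⟩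
      refine ⟨(1, 0), (m - 1, α), by ring, zero_add α, ?_⟩
      simp only [hσ0, one_zpow, zpow_one, Units.val_one]
      exact fun hc => hα (Units.ext (by simpa using hc.symm))
    · push_neg at h
      obtain ⟨g, hg⟩ := h
      refine ⟨(m, α - g), (0, g), by ring, sub_add_cancel α g, ?_⟩
      simp only [zpow_zero, Units.val_one]
      exact fun hc => hg (Units.ext (by simpa using hc.symm))
  -- each basis commutator lies in N
  have hbC : ∀ p q : ℤ × G, b p * b q - b q * b p ∈ N := by
    intro p q
    rw [hcomm]
    by_cases h : (p.1 + q.1, p.2 + q.2) ∈ Λ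
    · rw [hcoeff p q h, sub_self, zero_smul]
      exact zero_mem _
    · exact Submodule.smul_mem _ _ (Submodule.subset_span ⟨_, h, rfl⟩)
  -- every commutator lies in N
  have hxbq : ∀ (x : A) (q : ℤ × G), x * b q - b q * x ∈ N := by
    intro x q
    have hx : x ∈ Submodule.comap
        (LinearMap.mulRight ℂ (b q) - LinearMap.mulLeft ℂ (b q)) N := by
      have hle : Submodule.span ℂ (Set.range ⇑b) ≤ Submodule.comap
          (LinearMap.mulRight ℂ (b q) - LinearMap.mulLeft ℂ (b q)) N := by
        rw [Submodule.span_le]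
        rintro a ⟨p, rfl⟩
        simpa using hbC p q
      exact hle (by rw [b.span_eq]; trivial)
    simpa using hx
  have hCle : Submodule.span ℂ Cs ≤ N := by
    rw [Submodule.span_le]
    rintro z ⟨x, y, rfl⟩
    have hy : y ∈ Submodule.comap
        (LinearMap.mulLeft ℂ x - LinearMap.mulRight ℂ x) N := by
      have hle : Submodule.span ℂ (Set.range ⇑b) ≤ Submodule.comap
          (LinearMap.mulLeft ℂ x - LinearMap.mulRight ℂ x) N := by
        rw [Submodule.span_le]
        rintro a ⟨q, rfl⟩
        simpa using hxbq x q
      exact hle (by rw [b.span_eq]; trivial)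
    simpa using hy
  -- N is contained in the span of commutators
  have hNle : N ≤ Submodule.span ℂ Cs := by
    rw [hNdef, Submodule.span_le]
    rintro z ⟨p, hp, rfl⟩
    obtain ⟨q, r, hq1, hq2, hc⟩ := hw2 p hp
    have hmem : b q * b r - b r * b q ∈ Submodule.span ℂ Cs :=
      Submodule.subset_span ⟨b q, b r, rfl⟩
    rw [hcomm q r, hq1, hq2] at hmem
    have h2 := Submodule.smul_mem _
      ((((σ q.2 ^ r.1 : ℂˣ) : ℂ) - ((σ r.2 ^ q.1 : ℂˣ) : ℂ))⁻¹) hmem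
    rwa [smul_smul, inv_mul_cancel₀ (sub_ne_zero.2 hc), one_smul] at h2
  -- monomials in Λ are central
  have hbZ : ∀ p ∈ Λ, ∀ q : ℤ × G, b p * b q = b q * b p := by
    rintro ⟨m, α⟩ ⟨h1, h2⟩ ⟨n, β⟩
    rw [hmul, hmul, h2, h1 β, add_comm n m, add_comm β α]
    norm_num
  have hZle : Z ≤ Subalgebra.toSubmodule (Subalgebra.center ℂ A) := by
    rw [hZdef, Submodule.span_le]
    rintro z ⟨p, hp, rfl⟩
    simp only [SetLike.mem_coe, Subalgebra.mem_toSubmodule]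
    rw [Subalgebra.mem_center_iff]
    intro y
    have hy : y ∈ LinearMap.ker (LinearMap.mulLeft ℂ (b p) - LinearMap.mulRight ℂ (b p)) := by
      have hle : Submodule.span ℂ (Set.range ⇑b) ≤
          LinearMap.ker (LinearMap.mulLeft ℂ (b p) - LinearMap.mulRight ℂ (b p)) := by
        rw [Submodule.span_le]
        rintro a ⟨q, rfl⟩
        simp [LinearMap.mem_ker, hbZ p hp q]
      exact hle (by rw [b.span_eq]; trivial)
    have := LinearMap.mem_ker.mp hy
    simp only [LinearMap.sub_apply, LinearMap.mulLeft_apply, LinearMap.mulRight_apply,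
      sub_eq_zero] at this
    exact this.symm
  -- central elements are supported on Λ
  have hcen : Subalgebra.toSubmodule (Subalgebra.center ℂ A) ≤ Z := by
    intro z hz
    rw [hZdef, Module.Basis.mem_span_image]
    intro p hp
    by_contra hpΛ
    obtain ⟨q, hcq⟩ := hw1 p hpΛ
    have hT : (b.coord (p.1 + q.1, p.2 + q.2)).comp
        (LinearMap.mulRight ℂ (b q) - LinearMap.mulLeft ℂ (b q))
        = (((σ p.2 ^ q.1 : ℂˣ) : ℂ) - ((σ q.2 ^ p.1 : ℂˣ) : ℂ)) • b.coord p := by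
      apply b.ext
      intro p'
      simp only [LinearMap.comp_apply, LinearMap.sub_apply, LinearMap.mulRight_apply,
        LinearMap.mulLeft_apply, LinearMap.smul_apply]
      rw [hcomm p' q, map_smul]
      by_cases h : p' = p
      · subst h
        simp [Module.Basis.coord_apply, Module.Basis.repr_self]
      · have hne : (p'.1 + q.1, p'.2 + q.2) ≠ (p.1 + q.1, p.2 + q.2) := by
          intro hcontra
          apply h
          have h1 : p'.1 = p.1 := by
            have := congrArg Prod.fst hcontra
            simpa using this
          have h2 : p'.2 = p.2 := by
            have := congrArg Prod.snd hcontra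
            simpa using this
          exact Prod.ext h1 h2
        simp [Module.Basis.coord_apply, Module.Basis.repr_self, Finsupp.single_apply, hne, h]
    have hzc : z * b q - b q * z = 0 := by
      rw [Subalgebra.mem_center_iff.mp ((Subalgebra.mem_toSubmodule _).mp hz) (b q), sub_self]
    have happ := DFunLike.congr_fun hT z
    simp only [LinearMap.comp_apply, LinearMap.sub_apply, LinearMap.mulRight_apply,
      LinearMap.mulLeft_apply, LinearMap.smul_apply, hzc, map_zero] at happ
    have hcne : (((σ p.2 ^ q.1 : ℂˣ) : ℂ) - ((σ q.2 ^ p.1 : ℂˣ) : ℂ)) ≠ 0 :=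
      sub_ne_zero.2 hcq
    simp only [smul_eq_mul, Module.Basis.coord_apply] at happ
    exact Finsupp.mem_support_iff.mp hp
      ((mul_eq_zero.mp happ.symm).resolve_left hcne)
  -- the two spans are complementary
  have hdisj : Disjoint N Z := by
    rw [Submodule.disjoint_def]
    intro x hxN hxZ
    rw [hNdef, Module.Basis.mem_span_image] at hxN
    rw [hZdef, Module.Basis.mem_span_image] at hxZ
    have hr : b.repr x = 0 := by
      ext p
      by_contra h
      exact hxN (Finsupp.mem_support_iff.2 h) (hxZ (Finsupp.mem_support_iff.2 h))
    exact b.repr.map_eq_zero_iff.mp hr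
  have hcod : N ⊔ Z = ⊤ := by
    rw [hNdef, hZdef, ← Submodule.span_union, ← Set.image_union, Set.compl_union_self,
      Set.image_univ, b.span_eq]
  have hCN : Submodule.span ℂ Cs = N := le_antisymm hCle hNle
  refine ⟨le_antisymm hZle hcen, hCN, ?_⟩
  rw [hCN]
  exact ⟨hdisj, codisjoint_iff.2 hcod⟩
end

section
/- Define on the centrally extended Lie algebra ĝl_ν(R_σ) = gl_ν(R_σ) ⊕ ℂc the bracket [E_{ij}t^m e^α, E_{kl}t^n e^β] = δ_{jk} σ(α)^n E_{il} t^{m+n} e^{α+β} − δ_{il} σ(β)^m E_{kj} t^{m+n} e^{α+β} + m δ_{il} δ_{jk} δ_{m+n,0} δ_{σ(α)σ(β),1} σ(α)^n c, with c central. Then this bracket satisfies the Jacobi identity (equivalently, the bilinear form ψ(E_{ij}t^m e^α, E_{kl}t^n e^β) = m δ_{il} δ_{jk} δ_{m+n,0} δ_{σ(α)σ(β),1} σ(α)^n defines a 2-cocycle on gl_ν(R_σ)). -/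
open Matrix

private theorem keyscalar (u v w : ℂ) (hu : u ≠ 0) (hv : v ≠ 0) (hw : w ≠ 0) (m n r : ℤ)
    (hs : m + n + r = 0) (hp : u * v * w = 1) :
    ((m+n : ℤ) : ℂ) * (u*v)^r * u^n + ((n+r : ℤ) : ℂ) * (v*w)^m * v^r
      + ((r+m : ℤ) : ℂ) * (w*u)^n * w^m = 0 := by
  obtain rfl : r = -(m+n) := by omega
  have hw' : w = (u*v)⁻¹ := by
    have huv : u * v ≠ 0 := mul_ne_zero hu hv
    field_simp
    linear_combination hp
  subst hw'
  have hum : u ^ m ≠ 0 := zpow_ne_zero m hu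
  have hun : u ^ n ≠ 0 := zpow_ne_zero n hu
  have hvm : v ^ m ≠ 0 := zpow_ne_zero m hv
  have hvn : v ^ n ≠ 0 := zpow_ne_zero n hv
  simp only [mul_zpow, _root_.inv_zpow, neg_add, zpow_add₀ hu, zpow_add₀ hv, _root_.zpow_neg, mul_inv,
    inv_inv]
  push_cast
  field_simp
  ring

private theorem skewscalar (u v : ℂ) (hu : u ≠ 0) (m n : ℤ)
    (hs : m + n = 0) (hp : u * v = 1) :
    (m : ℂ) * u ^ n = -((n : ℂ) * v ^ m) := by
  obtain rfl : n = -m := by omega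
  have hv' : v = u⁻¹ := by
    field_simp
    linear_combination hp
  subst hv'
  push_cast
  simp only [_root_.zpow_neg, _root_.inv_zpow]
  ring

section CyclicSum

variable {M : Type} [Ring M] [Algebra ℂ M] (Ψ : M →ₗ[ℂ] M →ₗ[ℂ] ℂ)

private def Jc (X Y Z : M) : ℂ :=
  Ψ (X * Y - Y * X) Z + Ψ (Y * Z - Z * Y) X + Ψ (Z * X - X * Z) Y

private theorem Jc_cyc (X Y Z : M) : Jc Ψ X Y Z = Jc Ψ Y Z X := by
  simp only [Jc]; ring

private theorem Jc_add_left (X X' Y Z : M) :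
    Jc Ψ (X + X') Y Z = Jc Ψ X Y Z + Jc Ψ X' Y Z := by
  simp only [Jc, add_mul, mul_add]
  simp only [show ∀ a b c d : M, a + b - (c + d) = (a - c) + (b - d) from by intros; abel,
    map_add, LinearMap.add_apply]
  ring

private theorem Jc_smul_left (c : ℂ) (X Y Z : M) :
    Jc Ψ (c • X) Y Z = c * Jc Ψ X Y Z := by
  simp only [Jc, smul_mul_assoc, mul_smul_comm, ← smul_sub, _root_.map_smul, LinearMap.smul_apply,
    smul_eq_mul]
  ring

private theorem Jc_zero_left (Y Z : M) : Jc Ψ 0 Y Z = 0 := by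
  simp [Jc]

end CyclicSum

/-- the bilinear form
`ψ(E_{ij}t^m e^α, E_{kl}t^n e^β) = m δ_{il} δ_{jk} δ_{m+n,0} δ_{σ(α)σ(β),1} σ(α)^n`
is a 2-cocycle on `gl_ν(R_σ)` (`R_σ` modelled as a ℂ-algebra `A` with basis
`b (m,α) = t^m e^α` and multiplication `(t^m e^α)(t^n e^β) = σ(α)^n t^{m+n} e^{α+β}`);
equivalently, the bracket on `ĝl_ν(R_σ) = gl_ν(R_σ) ⊕ ℂc` given in (3.1)
satisfies the Jacobi identity. -/
theorem stmt12 (ν : ℕ) (G : Type) [AddCommGroup G] (σ : G → ℂˣ)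
    (hσ : ∀ α β : G, σ (α + β) = σ α * σ β)
    (A : Type) [Ring A] [Algebra ℂ A]
    (b : Module.Basis (ℤ × G) ℂ A)
    (hone : b (0, (0 : G)) = 1)
    (hmul : ∀ (m n : ℤ) (α β : G),
      b (m, α) * b (n, β) = ((σ α ^ n : ℂˣ) : ℂ) • b (m + n, α + β))
    (Ψ : Matrix (Fin ν) (Fin ν) A →ₗ[ℂ] Matrix (Fin ν) (Fin ν) A →ₗ[ℂ] ℂ)
    (hΨ : ∀ (i j k l : Fin ν) (m n : ℤ) (α β : G),
      Ψ (Matrix.single i j (b (m, α)))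
          (Matrix.single k l (b (n, β)))
        = if i = l ∧ j = k ∧ m + n = 0 ∧ ((σ α : ℂ) * (σ β : ℂ)) = 1
          then (m : ℂ) * ((σ α : ℂ) ^ n) else 0) :
    (∀ X Y, Ψ X Y = -Ψ Y X) ∧
    (∀ X Y Z, Ψ (X * Y - Y * X) Z + Ψ (Y * Z - Z * Y) X
        + Ψ (Z * X - X * Z) Y = 0) := by
  classical
  -- the spanning set
  set S : Set (Matrix (Fin ν) (Fin ν) A) :=
    Set.range (fun x : (Fin ν × Fin ν) × (ℤ × G) =>
      Matrix.single x.1.1 x.1.2 (b x.2)) with hS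
  have hmemS : ∀ (i j : Fin ν) (a : A),
      Matrix.single i j a ∈ Submodule.span ℂ S := by
    intro i j a
    have ha : a ∈ Submodule.span ℂ (Set.range b) := by rw [b.span_eq]; trivial
    induction ha using Submodule.span_induction with
    | mem x hx =>
        obtain ⟨p, rfl⟩ := hx
        exact Submodule.subset_span ⟨((i, j), p), rfl⟩
    | zero => rw [Matrix.single_zero]; exact Submodule.zero_mem _
    | add x y hx hy ihx ihy =>
        rw [Matrix.single_add]; exact Submodule.add_mem _ ihx ihy
    | smul c x hx ih =>
        rw [← Matrix.smul_single]; exact Submodule.smul_mem _ _ ih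
  have hX : ∀ X : Matrix (Fin ν) (Fin ν) A, X ∈ Submodule.span ℂ S := by
    intro X
    rw [Matrix.matrix_eq_sum_single X]
    exact Submodule.sum_mem _ fun i _ => Submodule.sum_mem _ fun j _ => hmemS i j _
  have hu0 : ∀ α : G, ((σ α : ℂ)) ≠ 0 := fun α => Units.ne_zero (σ α)
  -- multiplication of basis matrices
  have hmulE : ∀ (i j k l : Fin ν) (m n : ℤ) (α β : G),
      Matrix.single i j (b (m, α)) * Matrix.single k l (b (n, β)) =
        if j = k then ((σ α : ℂ) ^ n) • Matrix.single i l (b (m + n, α + β))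
        else 0 := by
    intro i j k l m n α β
    by_cases h : j = k
    · subst h
      rw [if_pos rfl, Matrix.single_mul_single_same, hmul, Matrix.smul_single,
        Units.val_zpow_eq_zpow_val]
    · rw [if_neg h]
      simp [Matrix.single_mul_single_of_ne, h]
  -- canonical form of Ψ on product of basis matrices
  have termL : ∀ (i j k l p q : Fin ν) (m n r : ℤ) (α β γ : G),
      Ψ (Matrix.single i j (b (m, α)) * Matrix.single k l (b (n, β)))
        (Matrix.single p q (b (r, γ)))
      = if j = k ∧ i = q ∧ l = p ∧ m + n + r = 0
            ∧ (σ α : ℂ) * (σ β : ℂ) * (σ γ : ℂ) = 1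
        then ((m + n : ℤ) : ℂ) * ((σ α : ℂ) * (σ β : ℂ)) ^ r * (σ α : ℂ) ^ n
        else 0 := by
    intro i j k l p q m n r α β γ
    rw [hmulE]
    by_cases h : j = k
    · subst h
      rw [if_pos rfl, _root_.map_smul, LinearMap.smul_apply, smul_eq_mul, hΨ, hσ, Units.val_mul]
      by_cases h2 : i = q ∧ l = p ∧ m + n + r = 0 ∧ (σ α : ℂ) * (σ β : ℂ) * (σ γ : ℂ) = 1
      · rw [if_pos ⟨h2.1, h2.2.1, h2.2.2.1, h2.2.2.2⟩,
          if_pos ⟨rfl, h2.1, h2.2.1, h2.2.2.1, h2.2.2.2⟩]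
        push_cast
        ring
      · rw [if_neg, if_neg]
        · ring
        · rintro ⟨-, h3⟩; exact h2 h3
        · rintro ⟨h3, h4, h5, h6⟩; exact h2 ⟨h3, h4, h5, h6⟩
    · rw [if_neg h, map_zero, LinearMap.zero_apply, if_neg]
      rintro ⟨h3, -⟩; exact h h3
  -- skew-symmetry on basis elements
  have skew_basis : ∀ (i j k l : Fin ν) (m n : ℤ) (α β : G),
      Ψ (Matrix.single i j (b (m, α))) (Matrix.single k l (b (n, β)))
        = -Ψ (Matrix.single k l (b (n, β)))
            (Matrix.single i j (b (m, α))) := by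
    intro i j k l m n α β
    rw [hΨ, hΨ]
    by_cases h : i = l ∧ j = k ∧ m + n = 0 ∧ (σ α : ℂ) * (σ β : ℂ) = 1
    · obtain ⟨h1, h2, h3, h4⟩ := h
      rw [if_pos ⟨h1, h2, h3, h4⟩,
        if_pos ⟨h2.symm, h1.symm, by omega, by linear_combination h4⟩]
      exact skewscalar _ _ (hu0 α) m n h3 h4
    · rw [if_neg h, if_neg, neg_zero]
      rintro ⟨h1, h2, h3, h4⟩
      exact h ⟨h2.symm, h1.symm, by omega, by linear_combination h4⟩
  -- Jacobi/cocycle identity on basis elements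
  have jac_basis : ∀ (i j k l p q : Fin ν) (m n r : ℤ) (α β γ : G),
      Jc Ψ (Matrix.single i j (b (m, α))) (Matrix.single k l (b (n, β)))
        (Matrix.single p q (b (r, γ))) = 0 := by
    intro i j k l p q m n r α β γ
    set u : ℂ := (σ α : ℂ) with hu
    set v : ℂ := (σ β : ℂ) with hv
    set w : ℂ := (σ γ : ℂ) with hw
    simp only [Jc, map_sub, LinearMap.sub_apply, termL]
    have eA3 : (l = p ∧ k = j ∧ q = i ∧ n + r + m = 0 ∧ v * w * u = 1)
        ↔ (j = k ∧ i = q ∧ l = p ∧ m + n + r = 0 ∧ u * v * w = 1) := by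
      constructor <;> rintro ⟨h1, h2, h3, h4, h5⟩
      · exact ⟨h2.symm, h3.symm, h1, by omega, by linear_combination h5⟩
      · exact ⟨h3, h1.symm, h2.symm, by omega, by linear_combination h5⟩
    have eA5 : (q = i ∧ p = l ∧ j = k ∧ r + m + n = 0 ∧ w * u * v = 1)
        ↔ (j = k ∧ i = q ∧ l = p ∧ m + n + r = 0 ∧ u * v * w = 1) := by
      constructor <;> rintro ⟨h1, h2, h3, h4, h5⟩
      · exact ⟨h3, h1.symm, h2.symm, by omega, by linear_combination h5⟩
      · exact ⟨h2.symm, h3.symm, h1, by omega, by linear_combination h5⟩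
    have eB4 : (q = k ∧ p = j ∧ l = i ∧ r + n + m = 0 ∧ w * v * u = 1)
        ↔ (l = i ∧ k = q ∧ j = p ∧ n + m + r = 0 ∧ v * u * w = 1) := by
      constructor <;> rintro ⟨h1, h2, h3, h4, h5⟩
      · exact ⟨h3, h1.symm, h2.symm, by omega, by linear_combination h5⟩
      · exact ⟨h2.symm, h3.symm, h1, by omega, by linear_combination h5⟩
    have eB6 : (j = p ∧ i = l ∧ q = k ∧ m + r + n = 0 ∧ u * w * v = 1)
        ↔ (l = i ∧ k = q ∧ j = p ∧ n + m + r = 0 ∧ v * u * w = 1) := by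
      constructor <;> rintro ⟨h1, h2, h3, h4, h5⟩
      · exact ⟨h2.symm, h3.symm, h1, by omega, by linear_combination h5⟩
      · exact ⟨h3, h1.symm, h2.symm, by omega, by linear_combination h5⟩
    rw [← hu, ← hv, ← hw]
    simp only [eA3, eA5, eB4, eB6]
    by_cases hA : j = k ∧ i = q ∧ l = p ∧ m + n + r = 0 ∧ u * v * w = 1 <;>
      by_cases hB : l = i ∧ k = q ∧ j = p ∧ n + m + r = 0 ∧ v * u * w = 1
    · rw [if_pos hA, if_pos hA, if_pos hA, if_pos hB, if_pos hB, if_pos hB]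
      have k1 := keyscalar u v w (hu0 α) (hu0 β) (hu0 γ) m n r hA.2.2.2.1 hA.2.2.2.2
      have k2 := keyscalar v u w (hu0 β) (hu0 α) (hu0 γ) n m r hB.2.2.2.1 hB.2.2.2.2
      linear_combination k1 - k2
    · rw [if_pos hA, if_pos hA, if_pos hA, if_neg hB, if_neg hB, if_neg hB]
      have k1 := keyscalar u v w (hu0 α) (hu0 β) (hu0 γ) m n r hA.2.2.2.1 hA.2.2.2.2
      linear_combination k1
    · rw [if_neg hA, if_neg hA, if_neg hA, if_pos hB, if_pos hB, if_pos hB]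
      have k2 := keyscalar v u w (hu0 β) (hu0 α) (hu0 γ) n m r hB.2.2.2.1 hB.2.2.2.2
      linear_combination -k2
    · rw [if_neg hA, if_neg hA, if_neg hA, if_neg hB, if_neg hB, if_neg hB]
      ring
  constructor
  · -- skew-symmetry
    intro X Y
    induction hX X, hX Y using Submodule.span_induction₂ with
    | mem_mem x y hx hy =>
        obtain ⟨⟨⟨i, j⟩, m, α⟩, rfl⟩ := hx
        obtain ⟨⟨⟨k, l⟩, n, β⟩, rfl⟩ := hy
        exact skew_basis i j k l m n α β
    | zero_left y hy => simp
    | zero_right x hx => simp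
    | add_left x y z hx hy hz h1 h2 => simp only [map_add, LinearMap.add_apply, h1, h2]; ring
    | add_right x y z hx hy hz h1 h2 => simp only [map_add, LinearMap.add_apply, h1, h2]; ring
    | smul_left c x y hx hy h => simp only [_root_.map_smul, LinearMap.smul_apply, smul_eq_mul, h]; ring
    | smul_right c x y hx hy h => simp only [_root_.map_smul, LinearMap.smul_apply, smul_eq_mul, h]; ring
  · -- Jacobi identity
    intro X Y Z
    have key : ∀ X Y Z : Matrix (Fin ν) (Fin ν) A, Jc Ψ X Y Z = 0 := by
      intro X Y Z
      induction hX X, hX Y using Submodule.span_induction₂ with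
      | mem_mem x y hx hy =>
          induction hX Z using Submodule.span_induction with
          | mem z hz =>
              obtain ⟨⟨⟨i, j⟩, m, α⟩, rfl⟩ := hx
              obtain ⟨⟨⟨k, l⟩, n, β⟩, rfl⟩ := hy
              obtain ⟨⟨⟨p, q⟩, r, γ⟩, rfl⟩ := hz
              exact jac_basis i j k l p q m n r α β γ
          | zero =>
              rw [Jc_cyc Ψ x y 0, Jc_cyc Ψ y 0 x, Jc_zero_left]
          | add z1 z2 hz1 hz2 ih1 ih2 =>
              rw [Jc_cyc Ψ x y (z1 + z2), Jc_cyc Ψ y (z1 + z2) x, Jc_add_left,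
                Jc_cyc Ψ z1 x y, Jc_cyc Ψ z2 x y, ih1, ih2, add_zero]
          | smul c z hz ih =>
              rw [Jc_cyc Ψ x y (c • z), Jc_cyc Ψ y (c • z) x, Jc_smul_left,
                Jc_cyc Ψ z x y, ih, mul_zero]
      | zero_left y hy => rw [Jc_zero_left]
      | zero_right x hx => rw [Jc_cyc Ψ x 0 Z, Jc_zero_left]
      | add_left x y z hx hy hz h1 h2 => rw [Jc_add_left, h1, h2, add_zero]
      | add_right x y z hx hy hz h1 h2 =>
          rw [Jc_cyc Ψ x (y + z) Z, Jc_add_left, ← Jc_cyc Ψ x y Z, ← Jc_cyc Ψ x z Z,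
            h1, h2, add_zero]
      | smul_left c x y hx hy h => rw [Jc_smul_left, h, mul_zero]
      | smul_right c x y hx hy h =>
          rw [Jc_cyc Ψ x (c • y) Z, Jc_smul_left, ← Jc_cyc Ψ x y Z, h, mul_zero]
    exact key X Y Z
end

section
/- For ρ = ±1 set w_{2j-1}(ρ) = 1 + i·ρ·e^{ε̄_{2j-1}} and w_{2j}(ρ) = 1 + ρ·e^{ε̄_{2j}} in the twisted group algebra ℂ[Γ̄], and for ρ_1, ..., ρ_ν ∈ {±1} set w(ρ_1,...,ρ_ν) = ∏_{j=1}^ν w_j(ρ_j) (product in increasing order of j). Then for odd j, e^{ε̄_j} · w(ρ_1,...,ρ_ν) = i·ρ_j · w(−ρ_1,...,−ρ_j, ρ_{j+1},...,ρ_ν), and for even j, e^{ε̄_j} · w(ρ_1,...,ρ_ν) = ρ_j · w(−ρ_1,...,−ρ_{j-1}, ρ_j,...,ρ_ν). -/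
open Finset

/-- The bimultiplicative two-cocycle `ε` on `Γ = ℤ^ν`, with
`ε(ε_i, ε_j) = 1` if `i ≤ j` and `−1` if `i > j`. -/
noncomputable def eps (ν : ℕ) (α β : Fin ν → ℤ) : ℂ :=
  ∏ i, ∏ j, (if i ≤ j then (1 : ℂ) else -1) ^ (α i * β j)

/-- The image `ε̄_j` of the `j`-th standard basis vector in `Γ/2Γ = (ℤ/2)^ν`. -/
def uvec (ν : ℕ) (j : Fin ν) : Fin ν → ZMod 2 := fun i => if i = j then 1 else 0

/-- `w_j(ρ)`: with 0-based indexing, `w_j(ρ) = 1 + iρ e^{ε̄_j}` for `j` in an odd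
(1-based) position and `1 + ρ e^{ε̄_j}` for `j` in an even (1-based) position. -/
noncomputable def wfac (ν : ℕ) (A : Type) [Ring A] [Algebra ℂ A]
    (e : (Fin ν → ZMod 2) → A) (j : Fin ν) (r : ℂ) : A :=
  if (j : ℕ) % 2 = 0 then 1 + (Complex.I * r) • e (uvec ν j)
  else 1 + r • e (uvec ν j)

/-- `w(ρ_1,…,ρ_ν) = ∏_{j=1}^ν w_j(ρ_j)`, the product taken in increasing order. -/
noncomputable def wprod (ν : ℕ) (A : Type) [Ring A] [Algebra ℂ A]
    (e : (Fin ν → ZMod 2) → A) (ρ : Fin ν → ℂ) : A :=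
  (List.ofFn fun j => wfac ν A e j (ρ j)).prod

lemma pass_list {A : Type} [Ring A] (x : A) :
    ∀ {l m : List A}, List.Forall₂ (fun a b => x * a = b * x) l m →
      x * l.prod = m.prod * x := by
  intro l m h
  induction h with
  | nil => simp
  | @cons a b l m hab _ ih =>
    simp only [List.prod_cons]
    rw [← mul_assoc, hab, mul_assoc, ih, ← mul_assoc]

lemma eps_single (ν : ℕ) (k l : Fin ν) :
    eps ν (fun i => if i = k then 1 else 0) (fun i => if i = l then 1 else 0)
      = if k ≤ l then 1 else -1 := by
  unfold eps
  rw [Finset.prod_eq_single k (fun b _ hb => by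
      apply Finset.prod_eq_one
      intro c _
      simp [hb]) (by simp)]
  rw [Finset.prod_eq_single l (fun c _ hc => by
      simp [hc]) (by simp)]
  simp

lemma main_aux (ν : ℕ) (A : Type) [Ring A] [Algebra ℂ A]
    (e : (Fin ν → ZMod 2) → A)
    (eanti : ∀ k l : Fin ν, k ≠ l →
      e (uvec ν k) * e (uvec ν l) = -(e (uvec ν l) * e (uvec ν k)))
    (ρ ρ' : Fin ν → ℂ) (j : Fin ν) (c : ℂ)
    (hlt : ∀ k, k < j → ρ' k = -ρ k)
    (hgt : ∀ k, j < k → ρ' k = ρ k)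
    (habs : e (uvec ν j) * wfac ν A e j (ρ j) = c • wfac ν A e j (ρ' j)) :
    e (uvec ν j) * wprod ν A e ρ = c • wprod ν A e ρ' := by
  have comm : ∀ (k : Fin ν) (r : ℂ), k ≠ j →
      e (uvec ν j) * wfac ν A e k r = wfac ν A e k (-r) * e (uvec ν j) := by
    intro k r hk
    have h := eanti j k (Ne.symm hk)
    unfold wfac
    split
    · rw [mul_add, add_mul, mul_one, one_mul, mul_smul_comm, smul_mul_assoc, h]
      rw [mul_neg, neg_smul, smul_neg]
    · rw [mul_add, add_mul, mul_one, one_mul, mul_smul_comm, smul_mul_assoc, h]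
      rw [neg_smul, smul_neg]
  -- split the products
  set l : List A := List.ofFn (fun k => wfac ν A e k (ρ k)) with hl
  set l' : List A := List.ofFn (fun k => wfac ν A e k (ρ' k)) with hl'
  have hjlt : (j : ℕ) < l.length := by simp [hl, j.isLt]
  have hjlt' : (j : ℕ) < l'.length := by simp [hl', j.isLt]
  have hsplit : l = l.take j ++ wfac ν A e j (ρ j) :: l.drop ((j : ℕ) + 1) := by
    conv_lhs => rw [← List.take_append_drop (j : ℕ) l]
    congr 1
    rw [List.drop_eq_getElem_cons hjlt]
    congr 1
    simp [hl]
  have hsplit' : l' = l'.take j ++ wfac ν A e j (ρ' j) :: l'.drop ((j : ℕ) + 1) := by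
    conv_lhs => rw [← List.take_append_drop (j : ℕ) l']
    congr 1
    rw [List.drop_eq_getElem_cons hjlt']
    congr 1
    simp [hl']
  have hdrop : l.drop ((j : ℕ) + 1) = l'.drop ((j : ℕ) + 1) := by
    apply List.ext_getElem
    · simp [hl, hl']
    · intro i h1 h2
      rw [List.getElem_drop, List.getElem_drop]
      have hi : (j : ℕ) + 1 + i < ν := by
        simp only [hl, List.length_drop, List.length_ofFn] at h1
        omega
      simp only [hl, hl', List.getElem_ofFn]
      congr 1
      refine (hgt ⟨(j : ℕ) + 1 + i, hi⟩ ?_).symm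
      simp only [Fin.lt_def]
      omega
  have hpass : e (uvec ν j) * (l.take (j : ℕ)).prod
      = (l'.take (j : ℕ)).prod * e (uvec ν j) := by
    apply pass_list
    rw [List.forall₂_iff_get]
    constructor
    · simp [hl, hl']
    · intro i h1 h2
      have hij : i < (j : ℕ) := by
        simp only [hl, List.length_take, List.length_ofFn] at h1
        omega
      have hiν : i < ν := lt_trans hij j.isLt
      have hget : ∀ (g : Fin ν → ℂ) (h : i < ((List.ofFn fun k => wfac ν A e k (g k)).take (j:ℕ)).length),
          ((List.ofFn fun k => wfac ν A e k (g k)).take (j:ℕ)).get ⟨i, h⟩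
            = wfac ν A e ⟨i, hiν⟩ (g ⟨i, hiν⟩) := by
        intro g h
        rw [List.get_eq_getElem, List.getElem_take, List.getElem_ofFn]
      rw [hl, hl'] at *
      rw [hget ρ, hget ρ']
      have hne : (⟨i, hiν⟩ : Fin ν) ≠ j := by
        intro h; apply absurd hij; simp [← h]
      have hklt : (⟨i, hiν⟩ : Fin ν) < j := by
        show i < (j : ℕ); exact hij
      rw [hlt _ hklt]
      exact comm _ _ hne
  show e (uvec ν j) * l.prod = c • l'.prod
  rw [hsplit, hsplit']
  simp only [List.prod_append, List.prod_cons]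
  rw [hdrop]
  calc e (uvec ν j) * ((l.take (j:ℕ)).prod * (wfac ν A e j (ρ j) * (l'.drop ((j:ℕ)+1)).prod))
      = (e (uvec ν j) * (l.take (j:ℕ)).prod) * (wfac ν A e j (ρ j) * (l'.drop ((j:ℕ)+1)).prod) := by
        rw [mul_assoc]
    _ = ((l'.take (j:ℕ)).prod * e (uvec ν j)) * (wfac ν A e j (ρ j) * (l'.drop ((j:ℕ)+1)).prod) := by
        rw [hpass]
    _ = (l'.take (j:ℕ)).prod * ((e (uvec ν j) * wfac ν A e j (ρ j)) * (l'.drop ((j:ℕ)+1)).prod) := by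
        rw [mul_assoc, mul_assoc]
    _ = (l'.take (j:ℕ)).prod * ((c • wfac ν A e j (ρ' j)) * (l'.drop ((j:ℕ)+1)).prod) := by
        rw [habs]
    _ = c • ((l'.take (j:ℕ)).prod * (wfac ν A e j (ρ' j) * (l'.drop ((j:ℕ)+1)).prod)) := by
        rw [smul_mul_assoc, mul_smul_comm]

/-- in the twisted group algebra `ℂ[Γ̄]` (with `e^0 = 1` and
`e^ᾱ e^β̄ = ε(α,β) e^{α+β}`), for `j` in an odd (1-based) position
`e^{ε̄_j} w(ρ) = iρ_j w(−ρ_1,…,−ρ_j, ρ_{j+1},…,ρ_ν)`, and for `j` in an even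
(1-based) position `e^{ε̄_j} w(ρ) = ρ_j w(−ρ_1,…,−ρ_{j-1}, ρ_j,…,ρ_ν)`. -/
theorem stmt13 (ν : ℕ) (A : Type) [Ring A] [Algebra ℂ A]
    (e : (Fin ν → ZMod 2) → A)
    (hone : e 0 = 1)
    (hmul : ∀ α β : Fin ν → ℤ,
      e (fun i => (α i : ZMod 2)) * e (fun i => (β i : ZMod 2))
        = eps ν α β • e (fun i => ((α i + β i : ℤ) : ZMod 2)))
    (ρ : Fin ν → ℂ) (hρ : ∀ j, ρ j = 1 ∨ ρ j = -1) (j : Fin ν) :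
    ((j : ℕ) % 2 = 0 →
      e (uvec ν j) * wprod ν A e ρ
        = (Complex.I * ρ j) • wprod ν A e (fun i => if i ≤ j then -ρ i else ρ i)) ∧
    ((j : ℕ) % 2 = 1 →
      e (uvec ν j) * wprod ν A e ρ
        = ρ j • wprod ν A e (fun i => if i < j then -ρ i else ρ i)) := by
  have hcast : ∀ k : Fin ν,
      (fun i => (((if i = k then 1 else 0 : ℤ)) : ZMod 2)) = uvec ν k := by
    intro k; funext i; unfold uvec; split <;> simp
  have esq : ∀ k, e (uvec ν k) * e (uvec ν k) = 1 := by
    intro k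
    have h := hmul (fun i => if i = k then 1 else 0) (fun i => if i = k then 1 else 0)
    rw [hcast k] at h
    rw [h, eps_single]
    rw [if_pos (le_refl k), one_smul]
    have : (fun i => (((if i = k then 1 else 0) + (if i = k then 1 else 0) : ℤ) : ZMod 2))
        = (0 : Fin ν → ZMod 2) := by
      funext i; by_cases hik : i = k <;> simp [hik] <;> decide
    rw [this, hone]
  have eanti : ∀ k l : Fin ν, k ≠ l →
      e (uvec ν k) * e (uvec ν l) = -(e (uvec ν l) * e (uvec ν k)) := by
    intro k l hkl
    have h1 := hmul (fun i => if i = k then 1 else 0) (fun i => if i = l then 1 else 0)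
    have h2 := hmul (fun i => if i = l then 1 else 0) (fun i => if i = k then 1 else 0)
    rw [hcast k, hcast l] at h1 h2
    have hsum : (fun i => (((if i = k then 1 else 0) + (if i = l then 1 else 0) : ℤ) : ZMod 2))
        = (fun i => (((if i = l then 1 else 0) + (if i = k then 1 else 0) : ℤ) : ZMod 2)) := by
      funext i; rw [add_comm]
    rw [h1, h2, eps_single, eps_single, hsum, ← neg_smul]
    congr 1
    rcases lt_or_gt_of_ne hkl with h | h
    · rw [if_pos h.le, if_neg (not_le.mpr h)]; ring
    · rw [if_neg (not_le.mpr h), if_pos h.le]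
  have hr : ρ j * ρ j = 1 := by rcases hρ j with h | h <;> rw [h] <;> ring
  constructor
  · intro hodd
    apply main_aux ν A e eanti
    · intro k hk
      rw [if_pos hk.le]
    · intro k hk
      rw [if_neg (not_le.mpr hk)]
    · unfold wfac
      rw [if_pos hodd, if_pos hodd, if_pos (le_refl j)]
      rw [mul_add, mul_one, mul_smul_comm, esq j, smul_add, smul_smul]
      have h2 : Complex.I * ρ j * (Complex.I * -ρ j) = 1 := by
        rw [show Complex.I * ρ j * (Complex.I * -ρ j)
            = -(Complex.I * Complex.I) * (ρ j * ρ j) by ring, Complex.I_mul_I, hr]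
        ring
      rw [h2, one_smul]
      exact add_comm _ _
  · intro heven
    apply main_aux ν A e eanti
    · intro k hk
      rw [if_pos hk]
    · intro k hk
      rw [if_neg (asymm hk)]
    · have hne : ¬ ((j : ℕ) % 2 = 0) := by omega
      unfold wfac
      rw [if_neg hne, if_neg hne, if_neg (lt_irrefl j)]
      rw [mul_add, mul_one, mul_smul_comm, esq j, smul_add, smul_smul, hr, one_smul]
      exact add_comm _ _
end

section
/- The 2^ν elements w(ρ_1,...,ρ_ν) = ∏_{j=1}^ν w_j(ρ_j), for (ρ_1,...,ρ_ν) ∈ {±1}^ν, where w_{2j-1}(ρ) = 1 + i ρ e^{ε̄_{2j-1}} and w_{2j}(ρ) = 1 + ρ e^{ε̄_{2j}}, form a ℂ-basis of the twisted group algebra ℂ[Γ̄] of (ℤ/2ℤ)^ν. -/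
open Finset

noncomputable def cc (ν : ℕ) (j : Fin ν) : ℂ := if (j : ℕ) % 2 = 0 then Complex.I else 1

def tb (ν : ℕ) (α : Fin ν → Bool) : Fin ν → ZMod 2 := fun i => if α i then 1 else 0

noncomputable def Mc (ν : ℕ) (ρ : Fin ν → ℂ) (α : Fin ν → Bool) : ℂ :=
  ∏ j, if α j then cc ν j * ρ j else 1

lemma cc_ne_zero (ν : ℕ) (j : Fin ν) : cc ν j ≠ 0 := by
  unfold cc; split <;> simp [Complex.I_ne_zero]

lemma wfac_eq (ν : ℕ) (A : Type) [Ring A] [Algebra ℂ A]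
    (e : (Fin ν → ZMod 2) → A) (j : Fin ν) (r : ℂ) :
    wfac ν A e j r = 1 + (cc ν j * r) • e (uvec ν j) := by
  unfold wfac cc; split <;> simp

section
variable (ν : ℕ) (A : Type) [Ring A] [Algebra ℂ A] (e : (Fin ν → ZMod 2) → A)
  (hone : e 0 = 1)
  (hmul : ∀ α β : Fin ν → ℤ,
      e (fun i => (α i : ZMod 2)) * e (fun i => (β i : ZMod 2))
        = eps ν α β • e (fun i => ((α i + β i : ℤ) : ZMod 2)))

include hmul in
lemma key_mul (α : Fin ν → Bool) (jk : Fin ν) (hsupp : ∀ i, α i = true → (i : ℕ) < (jk : ℕ)) :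
    e (tb ν α) * e (uvec ν jk) = e (tb ν (Function.update α jk true)) := by
  have hjk : α jk = false := by
    by_cases h : α jk = true
    · exact absurd (hsupp jk h) (lt_irrefl _)
    · simpa using h
  have h := hmul (fun i => if α i then 1 else 0) (fun i => if i = jk then 1 else 0)
  have h1 : (fun i => (((if α i then 1 else 0 : ℤ)) : ZMod 2)) = tb ν α := by
    funext i; unfold tb; split <;> simp
  have h2 : (fun i => (((if i = jk then 1 else 0 : ℤ)) : ZMod 2)) = uvec ν jk := by
    funext i; unfold uvec; split <;> simp
  have h3 : eps ν (fun i => if α i then 1 else 0) (fun i => if i = jk then 1 else 0) = 1 := by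
    unfold eps
    apply Finset.prod_eq_one
    intro i _
    apply Finset.prod_eq_one
    intro l _
    by_cases hl : l = jk
    · subst hl
      by_cases hi : α i = true
      · have : i ≤ l := le_of_lt (by exact_mod_cast hsupp i hi)
        rw [if_pos this]; simp
      · simp [hi]
    · simp [hl]
  have h4 : (fun i => (((if α i then 1 else 0 : ℤ) + (if i = jk then 1 else 0 : ℤ)) : ZMod 2))
      = tb ν (Function.update α jk true) := by
    funext i
    by_cases hi : i = jk
    · subst hi; simp [hjk, tb, Function.update_self]
    · simp [hi, tb, Function.update_of_ne hi]
  simp only [Int.cast_add] at h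
  rw [h1, h2, h3, h4] at h
  simpa using h

include hone hmul in
lemma prefix_expand (ρ : Fin ν → ℂ) (k : ℕ) (hk : k ≤ ν) :
    ((List.ofFn fun j => wfac ν A e j (ρ j)).take k).prod
    = ∑ α ∈ Finset.univ.filter (fun α : Fin ν → Bool => ∀ j, α j = true → (j : ℕ) < k),
        Mc ν ρ α • e (tb ν α) := by
  induction k with
  | zero =>
      have hfil : Finset.univ.filter (fun α : Fin ν → Bool => ∀ j, α j = true → (j : ℕ) < 0)
          = {fun _ => false} := by
        ext α
        simp only [Finset.mem_filter, Finset.mem_univ, true_and, Finset.mem_singleton]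
        constructor
        · intro h; funext j
          by_cases hj : α j = true
          · exact absurd (h j hj) (Nat.not_lt_zero _)
          · simpa using hj
        · intro h j hj; rw [h] at hj; simp at hj
      rw [hfil]
      have htb : tb ν (fun _ => false) = 0 := by funext i; simp [tb]
      simp [Mc, htb, hone]
  | succ k ih =>
      have hk' : k < ν := hk
      set jk : Fin ν := ⟨k, hk'⟩ with hjkdef
      have hlen : k < (List.ofFn fun j => wfac ν A e j (ρ j)).length := by
        simp [hk']
      rw [List.prod_take_succ _ _ hlen, ih (le_of_lt hk')]
      set Sk := Finset.univ.filter (fun α : Fin ν → Bool => ∀ j, α j = true → (j : ℕ) < k)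
        with hSk
      have hget : (List.ofFn fun j => wfac ν A e j (ρ j))[k]'hlen = wfac ν A e jk (ρ jk) := by
        simp [List.getElem_ofFn, hjkdef]
      rw [hget, wfac_eq]
      rw [mul_add, mul_one, Finset.sum_mul]
      -- compute each term of the second sum
      have hterm : ∀ α ∈ Sk, (Mc ν ρ α • e (tb ν α)) * (cc ν jk * ρ jk) • e (uvec ν jk)
          = Mc ν ρ (Function.update α jk true) • e (tb ν (Function.update α jk true)) := by
        intro α hα
        rw [hSk, Finset.mem_filter] at hα
        have hsupp : ∀ i, α i = true → (i : ℕ) < (jk : ℕ) := hα.2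
        have hαjk : α jk = false := by
          by_cases h : α jk = true
          · exact absurd (hsupp jk h) (lt_irrefl _)
          · simpa using h
        rw [smul_mul_assoc, mul_smul_comm, smul_smul,
          key_mul ν A e hmul α jk hsupp]
        congr 1
        -- Mc update
        unfold Mc
        rw [← Finset.mul_prod_erase Finset.univ _ (Finset.mem_univ jk),
          ← Finset.mul_prod_erase Finset.univ
            (fun j => if Function.update α jk true j then cc ν j * ρ j else 1) (Finset.mem_univ jk)]
        rw [Function.update_self, if_pos rfl, hαjk]
        have : ∀ j ∈ Finset.univ.erase jk,
            (if Function.update α jk true j then cc ν j * ρ j else 1)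
            = (if α j then cc ν j * ρ j else 1) := by
          intro j hj
          rw [Function.update_of_ne (Finset.ne_of_mem_erase hj)]
        rw [Finset.prod_congr rfl this]
        simp only [if_true, Bool.false_eq_true, if_false]
        ring
      rw [Finset.sum_congr rfl hterm]
      -- now split the (k+1) filter
      have hsplit : Finset.univ.filter (fun α : Fin ν → Bool => ∀ j, α j = true → (j : ℕ) < k + 1)
          = Sk ∪ Sk.image (fun α => Function.update α jk true) := by
        ext β
        simp only [Finset.mem_filter, Finset.mem_univ, true_and, Finset.mem_union,
          Finset.mem_image, hSk]
        constructor
        · intro h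
          by_cases hb : β jk = true
          · right
            refine ⟨Function.update β jk false, ?_, ?_⟩
            · intro j hj
              by_cases hjj : j = jk
              · subst hjj; simp at hj
              · rw [Function.update_of_ne hjj] at hj
                have := h j hj
                have hne : (j : ℕ) ≠ k := by
                  intro hc; exact hjj (Fin.ext hc)
                omega
            · funext j
              by_cases hjj : j = jk
              · subst hjj; simp [hb]
              · simp [Function.update_of_ne hjj]
          · left
            intro j hj
            have := h j hj
            have hjj : j ≠ jk := by
              intro hc; subst hc; exact hb hj
            have hne : (j : ℕ) ≠ k := by intro hc; exact hjj (Fin.ext hc)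
            omega
        · intro h
          rcases h with h | ⟨γ, hγ, rfl⟩
          · intro j hj; exact Nat.lt_succ_of_lt (h j hj)
          · intro j hj
            by_cases hjj : j = jk
            · subst hjj; simp [hjkdef]
            · rw [Function.update_of_ne hjj] at hj
              exact Nat.lt_succ_of_lt (hγ j hj)
      have hdisj : Disjoint Sk (Sk.image (fun α => Function.update α jk true)) := by
        rw [Finset.disjoint_left]
        intro β hβ hβ'
        rw [hSk, Finset.mem_filter] at hβ
        rcases Finset.mem_image.mp hβ' with ⟨γ, _, rfl⟩
        have : Function.update γ jk true jk = true := by simp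
        have h2 := hβ.2 jk this
        exact absurd h2 (lt_irrefl _)
      have hinj : ∀ β ∈ Sk, ∀ γ ∈ Sk,
          Function.update β jk true = Function.update γ jk true → β = γ := by
        intro β hβ γ hγ hbg
        rw [hSk, Finset.mem_filter] at hβ hγ
        have hβjk : β jk = false := by
          by_cases h : β jk = true
          · exact absurd (hβ.2 jk h) (lt_irrefl _)
          · simpa using h
        have hγjk : γ jk = false := by
          by_cases h : γ jk = true
          · exact absurd (hγ.2 jk h) (lt_irrefl _)
          · simpa using h
        funext j
        by_cases hjj : j = jk
        · subst hjj; rw [hβjk, hγjk]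
        · have := congrFun hbg j
          simpa [Function.update_of_ne hjj] using this
      rw [hsplit, Finset.sum_union hdisj, Finset.sum_image hinj]

include hone hmul in
lemma wprod_expand (ρ : Fin ν → ℂ) :
    wprod ν A e ρ = ∑ α : Fin ν → Bool, Mc ν ρ α • e (tb ν α) := by
  have h := prefix_expand ν A e hone hmul ρ ν (le_refl ν)
  have htake : (List.ofFn fun j => wfac ν A e j (ρ j)).take ν
      = List.ofFn fun j => wfac ν A e j (ρ j) := by
    apply List.take_of_length_le; simp
  have hfil : Finset.univ.filter (fun α : Fin ν → Bool => ∀ j, α j = true → (j : ℕ) < ν)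
      = Finset.univ := by
    ext α; simp [Fin.is_lt]
  rw [htake, hfil] at h
  exact h

def boolE : Bool ≃ ZMod 2 where
  toFun b := if b then 1 else 0
  invFun z := decide (z = 1)
  left_inv := by decide
  right_inv := by decide

end

noncomputable def Qmat (ν : ℕ) : Matrix (Fin ν → Bool) (Fin ν → Bool) ℂ :=
  Matrix.of fun α ρ => ((2 : ℂ) ^ ν)⁻¹ *
    ∏ j, if α j then (cc ν j)⁻¹ * (if ρ j then 1 else -1) else 1

lemma Pmat_mul_Qmat (ν : ℕ) :
    (Matrix.of fun ρ α : Fin ν → Bool =>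
      Mc ν (fun j => if ρ j then (1 : ℂ) else -1) α) * Qmat ν = 1 := by
  ext ρ ρ'
  rw [Matrix.mul_apply]
  simp only [Matrix.of_apply, Qmat, Mc]
  have step1 : ∀ α : Fin ν → Bool,
      (∏ j, if α j then cc ν j * (if ρ j then (1:ℂ) else -1) else 1) *
        (((2 : ℂ) ^ ν)⁻¹ * ∏ j, if α j then (cc ν j)⁻¹ * (if ρ' j then 1 else -1) else 1)
      = ((2 : ℂ) ^ ν)⁻¹ * ∏ j,
          ((if α j then cc ν j * (if ρ j then (1:ℂ) else -1) else 1) *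
           (if α j then (cc ν j)⁻¹ * (if ρ' j then 1 else -1) else 1)) := by
    intro α
    rw [Finset.prod_mul_distrib]
    ring
  rw [Finset.sum_congr rfl (fun α _ => step1 α), ← Finset.mul_sum]
  have step2 : ∑ α : Fin ν → Bool, ∏ j,
      ((if α j then cc ν j * (if ρ j then (1:ℂ) else -1) else 1) *
       (if α j then (cc ν j)⁻¹ * (if ρ' j then 1 else -1) else 1))
      = ∏ j, ∑ b : Bool,
      ((if b then cc ν j * (if ρ j then (1:ℂ) else -1) else 1) *
       (if b then (cc ν j)⁻¹ * (if ρ' j then 1 else -1) else 1)) := by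
    rw [Fintype.prod_sum]
  rw [step2]
  have step3 : ∀ j, (∑ b : Bool,
      ((if b then cc ν j * (if ρ j then (1:ℂ) else -1) else 1) *
       (if b then (cc ν j)⁻¹ * (if ρ' j then 1 else -1) else 1)))
      = if ρ j = ρ' j then 2 else 0 := by
    intro j
    have hkey : ∀ a b : ℂ, (cc ν j * a) * ((cc ν j)⁻¹ * b) = a * b := by
      intro a b
      field_simp [cc_ne_zero ν j]
    have hcc : cc ν j * (cc ν j)⁻¹ = 1 := mul_inv_cancel₀ (cc_ne_zero ν j)
    rw [Fintype.sum_bool]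
    cases hb : ρ j <;> cases hb' : ρ' j <;>
      simp [hkey, hcc] <;> norm_num
  rw [Finset.prod_congr rfl (fun j _ => step3 j)]
  by_cases hρ : ρ = ρ'
  · subst hρ
    have hall : ∀ j : Fin ν, (if ρ j = ρ j then (2:ℂ) else 0) = 2 := fun j => if_pos rfl
    rw [Finset.prod_congr rfl fun j _ => hall j, Finset.prod_const, Finset.card_univ,
      Fintype.card_fin, inv_mul_cancel₀ (pow_ne_zero ν two_ne_zero), Matrix.one_apply_eq]
  · obtain ⟨j₀, hj₀⟩ := Function.ne_iff.mp hρ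
    rw [Finset.prod_eq_zero (Finset.mem_univ j₀) (by rw [if_neg hj₀])]
    rw [Matrix.one_apply_ne hρ, mul_zero]

/-- the `2^ν` elements `w(ρ_1,…,ρ_ν)`, `(ρ_1,…,ρ_ν) ∈ {±1}^ν`
(sign patterns encoded by `Fin ν → Bool`), form a ℂ-basis of the twisted group
algebra `ℂ[Γ̄]` of `(ℤ/2)^ν`. -/
theorem stmt15 (ν : ℕ) (A : Type) [Ring A] [Algebra ℂ A]
    (e : (Fin ν → ZMod 2) → A)
    (bE : Module.Basis (Fin ν → ZMod 2) ℂ A) (hbE : ∀ v, bE v = e v)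
    (hone : e 0 = 1)
    (hmul : ∀ α β : Fin ν → ℤ,
      e (fun i => (α i : ZMod 2)) * e (fun i => (β i : ZMod 2))
        = eps ν α β • e (fun i => ((α i + β i : ℤ) : ZMod 2))) :
    LinearIndependent ℂ
      (fun ρ : Fin ν → Bool =>
        wprod ν A e (fun j => if ρ j then 1 else -1)) ∧
    Submodule.span ℂ
        (Set.range fun ρ : Fin ν → Bool =>
          wprod ν A e (fun j => if ρ j then 1 else -1)) = ⊤ := by
  classical
  let v : (Fin ν → Bool) → A :=
    fun ρ => wprod ν A e (fun j => if ρ j then 1 else -1)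
  let q : (Fin ν → ZMod 2) ≃ (Fin ν → Bool) :=
    (Equiv.piCongrRight fun _ => boolE).symm
  let bE' : Module.Basis (Fin ν → Bool) ℂ A := bE.reindex q
  have hbE' : ∀ β, bE' β = e (tb ν β) := by
    intro β
    simp only [bE', Module.Basis.reindex_apply]
    have hq : q.symm β = tb ν β := by
      funext i
      simp [q, boolE, tb, Equiv.piCongrRight]
    rw [hq, hbE]
  have hvsum : ∀ ρ : Fin ν → Bool,
      v ρ = ∑ α : Fin ν → Bool, Mc ν (fun j => if ρ j then 1 else -1) α • bE' α := by
    intro ρ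
    show wprod ν A e (fun j => if ρ j then 1 else -1) = _
    rw [wprod_expand ν A e hone hmul]
    exact Finset.sum_congr rfl fun α _ => by rw [hbE' α]
  have hT : ∀ (α ρ : Fin ν → Bool), bE'.toMatrix v α ρ
      = Mc ν (fun j => if ρ j then (1 : ℂ) else -1) α := by
    intro α ρ
    rw [Module.Basis.toMatrix_apply, hvsum ρ]
    simp [Finsupp.single_apply]
  have hdet : IsUnit (bE'.det v) := by
    rw [Module.Basis.det_apply]
    have hmat : bE'.toMatrix v
        = (Matrix.of fun ρ α : Fin ν → Bool =>
            Mc ν (fun j => if ρ j then (1 : ℂ) else -1) α).transpose := by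
      ext α ρ
      rw [hT]
      rfl
    rw [hmat, Matrix.det_transpose]
    exact Matrix.isUnit_det_of_right_inverse (Pmat_mul_Qmat ν)
  exact (Module.Basis.is_basis_iff_det bE').mpr hdet
end
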